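/- arXiv:math/0610829 — 4 statements merged into one kernel-verified Lean document; each statement's English description precedes it below -/
import Mathlib

section
/- Let $X$ and $Y$ be normal $d$-pseudomanifolds ($d \geq 2$) such that $Y$ is obtained from $X$ by starring a new vertex in a facet of $X$. Then $Y$ is a stacked $d$-sphere if and only if $X$ is a stacked $d$-sphere. -/
open Finset

noncomputable section

attribute [local instance] Classical.propDecidable

variable {V : Type} [DecidableEq V]

/-- A (finite abstract) simplicial complex: a finite family of nonempty finite sets (faces)
closed under taking nonempty subsets. -/
def IsComplex (K : Finset (Finset V)) : Prop :=
  (∀ s ∈ K, s.Nonempty) ∧ ∀ s ∈ K, ∀ t ⊆ s, t.Nonempty → t ∈ K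

/-- The vertex set of a complex: the union of its faces. -/
def vertexSet (K : Finset (Finset V)) : Finset V := K.sup id

/-- A facet is a maximal face. -/
def IsFacet (K : Finset (Finset V)) (s : Finset V) : Prop :=
  s ∈ K ∧ ∀ t ∈ K, s ⊆ t → s = t

/-- A complex is pure of dimension `d` if it is nonempty and every facet has `d + 1` vertices. -/
def IsPure (K : Finset (Finset V)) (d : ℕ) : Prop :=
  K.Nonempty ∧ ∀ s, IsFacet K s → s.card = d + 1

/-- The edge graph (1-skeleton) of a complex. -/
def edgeGraph (K : Finset (Finset V)) : SimpleGraph V where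
  Adj x y := x ≠ y ∧ ({x, y} : Finset V) ∈ K
  symm := by
    constructor
    intro x y h
    refine ⟨h.1.symm, ?_⟩
    rw [Finset.pair_comm]
    exact h.2
  loopless := by
    constructor
    intro x h
    exact h.1 rfl

/-- A complex is connected if it has a vertex and any two of its vertices are joined by a
path in its edge graph. -/
def CConnected (K : Finset (Finset V)) : Prop :=
  (vertexSet K).Nonempty ∧
    ∀ u ∈ vertexSet K, ∀ v ∈ vertexSet K, (edgeGraph K).Reachable u v

/-- The link of a face `α`: all faces `β` disjoint from `α` with `α ∪ β` a face. -/
def link (K : Finset (Finset V)) (α : Finset V) : Finset (Finset V) :=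
  K.filter fun β => Disjoint α β ∧ α ∪ β ∈ K

/-- The number of edges (1-dimensional faces) of a complex. -/
def edgeCount (K : Finset (Finset V)) : ℕ := (K.filter fun s => s.card = 2).card

/-- A weak pseudomanifold of dimension `d`: a pure `d`-dimensional complex in which every
`(d-1)`-dimensional face lies in exactly two facets. -/
def IsWeakPM (K : Finset (Finset V)) (d : ℕ) : Prop :=
  IsComplex K ∧ IsPure K d ∧
    ∀ s ∈ K, s.card = d → (K.filter fun t => IsFacet K t ∧ s ⊆ t).card = 2

/-- A normal `d`-pseudomanifold: a connected weak pseudomanifold of dimension `d` in which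
the link of every face of dimension at most `d - 2` is connected. -/
def IsNormalPM (K : Finset (Finset V)) (d : ℕ) : Prop :=
  IsWeakPM K d ∧ CConnected K ∧
    ∀ s ∈ K, s.card ≤ d - 1 → CConnected (link K s)

/-- The standard `d`-sphere: the complex of all nonempty proper subsets of a `(d+2)`-set. -/
def IsStandardSphere (K : Finset (Finset V)) (d : ℕ) : Prop :=
  ∃ A : Finset V, A.card = d + 2 ∧ K = A.powerset.filter fun s => s.Nonempty ∧ s ≠ A

/-- `StarringOf X Y` : `Y` is obtained from `X` by starring a new vertex `v` in a facet
`σ` of `X`, i.e. by replacing the facet `σ` with the cone with apex `v` over its boundary. -/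
def StarringOf (X Y : Finset (Finset V)) : Prop :=
  ∃ (σ : Finset V) (v : V), IsFacet X σ ∧ v ∉ vertexSet X ∧
    Y = X.erase σ ∪ (σ.powerset.filter fun τ => τ ≠ σ).image fun τ => insert v τ

/-- A stacked `d`-sphere: a complex obtained from the standard `d`-sphere by a finite
sequence of starrings. -/
def IsStackedSphere (K : Finset (Finset V)) (d : ℕ) : Prop :=
  ∃ S : Finset (Finset V), IsStandardSphere S d ∧ Relation.ReflTransGen StarringOf S K

/-- The induced subcomplex on a set `U` of vertices. -/
def induced (K : Finset (Finset V)) (U : Finset V) : Finset (Finset V) :=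
  K.filter fun s => s ⊆ U

/-- The simplicial complement of the induced subcomplex on `U`: the induced subcomplex on
the complementary set of vertices. -/
def simpComplement (K : Finset (Finset V)) (U : Finset V) : Finset (Finset V) :=
  induced K (vertexSet K \ U)

/-- The degree of a vertex: the number of vertices of its link. -/
def vertDegree (K : Finset (Finset V)) (v : V) : ℕ := (vertexSet (link K {v})).card

/-- `farApart G x y` : the distance from `x` to `y` in the graph `G` is at least `3`
(where unreachable counts as infinite distance). -/
def farApart (G : SimpleGraph V) (x y : V) : Prop :=
  x ≠ y ∧ ¬ G.Adj x y ∧ ∀ z : V, ¬ (G.Adj x z ∧ G.Adj z y)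

/-- `Admissible X σ₁ σ₂ ψ` : `σ₁, σ₂` are disjoint facets of `X` and `ψ` restricts to a
bijection from `σ₁` onto `σ₂` moving every `x ∈ σ₁` to distance at least 3 from itself. -/
def Admissible (X : Finset (Finset V)) (σ₁ σ₂ : Finset V) (ψ : V → V) : Prop :=
  IsFacet X σ₁ ∧ IsFacet X σ₂ ∧ Disjoint σ₁ σ₂ ∧ Set.BijOn ψ ↑σ₁ ↑σ₂ ∧
    ∀ x ∈ σ₁, farApart (edgeGraph X) x (ψ x)

/-- Elementary handle addition `X^ψ`: remove the two facets `σ₁, σ₂` and identify each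
`x ∈ σ₁` with `ψ x ∈ σ₂`. -/
def handleAdd (X : Finset (Finset V)) (σ₁ σ₂ : Finset V) (ψ : V → V) :
    Finset (Finset V) :=
  ((X.erase σ₁).erase σ₂).image fun s => s.image fun x => if x ∈ σ₁ then ψ x else x

/-- Isomorphism of simplicial complexes: an injection on vertices carrying the faces of one
complex exactly onto the faces of the other. -/
def CplxIso {W : Type} [DecidableEq W] (K : Finset (Finset V)) (L : Finset (Finset W)) :
    Prop :=
  ∃ f : V → W, Set.InjOn f ↑(vertexSet K) ∧ L = K.image fun s => s.image f

/-- The connected component of the complex `K` containing the vertex `v` (as a subcomplex). -/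
def componentOf (K : Finset (Finset V)) (v : V) : Finset (Finset V) :=
  K.filter fun s => ∀ x ∈ s, (edgeGraph K).Reachable v x

/-- The edges of `M` having exactly one end in `A`. -/
def crossEdges (M : Finset (Finset V)) (A : Finset V) : Finset (Finset V) :=
  M.filter fun e => e.card = 2 ∧ (e ∩ A).card = 1

/-- The graph whose vertices are the edges of `M` with exactly one end in `A`, two of them
being adjacent when the union of the corresponding edges is a 2-dimensional face of `M`. -/
def crossGraph (M : Finset (Finset V)) (A : Finset V) : SimpleGraph (Finset V) where
  Adj e f := e ≠ f ∧ e ∈ crossEdges M A ∧ f ∈ crossEdges M A ∧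
    e ∪ f ∈ M ∧ (e ∪ f).card = 3
  symm := by
    constructor
    intro e f h
    obtain ⟨h1, h2, h3, h4, h5⟩ := h
    exact ⟨h1.symm, h3, h2, by rwa [Finset.union_comm], by rwa [Finset.union_comm]⟩
  loopless := by
    constructor
    intro e h
    exact h.1 rfl

/-- The class `𝒦(d)`: normal `d`-pseudomanifolds all of whose vertex links are stacked
`(d-1)`-spheres. -/
def InClassK (K : Finset (Finset V)) (d : ℕ) : Prop :=
  IsNormalPM K d ∧ ∀ v ∈ vertexSet K, IsStackedSphere (link K {v}) (d - 1)

/-- The total number of partitions of `n`. -/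
def numPartitions (n : ℕ) : ℕ := Fintype.card (Nat.Partition n)

/-- The number of even partitions of `n` (those with an even number of even parts). -/
def numEvenPartitions (n : ℕ) : ℕ :=
  Fintype.card {p : Nat.Partition n // Even (Multiset.card (p.parts.filter fun i => Even i))}

/-- The number of odd partitions of `n` (those with an odd number of even parts). -/
def numOddPartitions (n : ℕ) : ℕ :=
  Fintype.card {p : Nat.Partition n // Odd (Multiset.card (p.parts.filter fun i => Even i))}

/-- The facets of `N^{d+1}_{m+d+1}` : the sets of `d+2` consecutive integers inside
`{1, …, m+d+1}`. -/
def NFacets (d m : ℕ) : Finset (Finset ℕ) :=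
  (Finset.Icc 1 m).image fun k => Finset.Icc k (k + d + 1)

/-- The complex `N^{d+1}_{m+d+1}` on vertex set `{1, …, m+d+1}` whose facets are the sets
of `d+2` consecutive integers. -/
def Ncomplex (d m : ℕ) : Finset (Finset ℕ) :=
  ((NFacets d m).biUnion Finset.powerset).filter fun s => s.Nonempty

/-- The facets of the boundary complex `∂N^{d+1}_{m+d+1}` : the `(d+1)`-element subsets of
`{1, …, m+d+1}` contained in exactly one facet of `N^{d+1}_{m+d+1}`. -/
def boundaryNFacets (d m : ℕ) : Finset (Finset ℕ) :=
  (Finset.Icc 1 (m + d + 1)).powerset.filter fun s =>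
    s.card = d + 1 ∧ ((Finset.Icc 1 m).filter fun k => s ⊆ Finset.Icc k (k + d + 1)).card = 1

/-- The boundary complex `∂N^{d+1}_{m+d+1}`. -/
def boundaryN (d m : ℕ) : Finset (Finset ℕ) :=
  ((boundaryNFacets d m).biUnion Finset.powerset).filter fun s => s.Nonempty


/-! ### Auxiliary lemmas -/

section Aux

lemma mem_vertexSet_iff {K : Finset (Finset V)} {a : V} :
    a ∈ vertexSet K ↔ ∃ s ∈ K, a ∈ s := by
  simp [vertexSet, Finset.mem_sup]

lemma subset_vertexSet {K : Finset (Finset V)} {s : Finset V} (h : s ∈ K) :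
    s ⊆ vertexSet K :=
  fun x hx => mem_vertexSet_iff.2 ⟨s, h, hx⟩

lemma not_mem_of_not_vertex {K : Finset (Finset V)} {s : Finset V} {v : V}
    (hv : v ∉ vertexSet K) (h : s ∈ K) : v ∉ s :=
  fun hvs => hv (subset_vertexSet h hvs)

lemma exists_facet {K : Finset (Finset V)} {s : Finset V} (h : s ∈ K) :
    ∃ t, IsFacet K t ∧ s ⊆ t := by
  obtain ⟨t, ht, hmax⟩ :=
    (K.filter fun u => s ⊆ u).exists_max_image Finset.card ⟨s, by simp [h]⟩
  rw [Finset.mem_filter] at ht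
  refine ⟨t, ⟨ht.1, ?_⟩, ht.2⟩
  intro u hu hsub
  exact Finset.eq_of_subset_of_card_le hsub
    (hmax u (Finset.mem_filter.2 ⟨hu, ht.2.trans hsub⟩))

lemma card_face_le {K : Finset (Finset V)} {d : ℕ} (hp : IsPure K d) {s : Finset V}
    (h : s ∈ K) : s.card ≤ d + 1 := by
  obtain ⟨t, htf, hst⟩ := exists_facet h
  calc s.card ≤ t.card := Finset.card_le_card hst
  _ = d + 1 := hp.2 t htf

lemma std_complex {S : Finset (Finset V)} {d : ℕ} (h : IsStandardSphere S d) :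
    IsComplex S := by
  obtain ⟨A, hA, rfl⟩ := h
  constructor
  · intro s hs; exact (Finset.mem_filter.1 hs).2.1
  · intro s hs t hts htne
    rw [Finset.mem_filter, Finset.mem_powerset] at hs ⊢
    refine ⟨hts.trans hs.1, htne, ?_⟩
    rintro rfl
    exact hs.2.2 (Finset.Subset.antisymm hs.1 hts)

lemma std_pure {S : Finset (Finset V)} {d : ℕ} (h : IsStandardSphere S d) :
    IsPure S d := by
  obtain ⟨A, hA, rfl⟩ := h
  obtain ⟨a, ha⟩ : A.Nonempty := Finset.card_pos.1 (by omega)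
  constructor
  · refine ⟨{a}, Finset.mem_filter.2 ⟨Finset.mem_powerset.2
      (Finset.singleton_subset_iff.2 ha), ⟨a, Finset.mem_singleton_self a⟩, ?_⟩⟩
    intro h'
    rw [← h'] at hA
    simp only [Finset.card_singleton] at hA
    omega
  · rintro s ⟨hsm, hmax⟩
    rw [Finset.mem_filter, Finset.mem_powerset] at hsm
    obtain ⟨hsA, hsne, hsneA⟩ := hsm
    have hlt : s.card < A.card := Finset.card_lt_card (hsA.ssubset_of_ne hsneA)
    rcases Nat.lt_or_ge s.card (d + 1) with hlt2 | hge
    · obtain ⟨x, hxA, hxs⟩ := Finset.exists_of_ssubset (hsA.ssubset_of_ne hsneA)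
      have hins : insert x s ∈ A.powerset.filter fun s => s.Nonempty ∧ s ≠ A := by
        refine Finset.mem_filter.2 ⟨Finset.mem_powerset.2 (Finset.insert_subset hxA hsA),
          Finset.insert_nonempty x s, ?_⟩
        intro hEq
        have : (insert x s).card < A.card := by
          rw [Finset.card_insert_of_notMem hxs]; omega
        rw [hEq] at this; omega
      have heq := hmax (insert x s) hins (Finset.subset_insert x s)
      exact absurd (heq ▸ Finset.mem_insert_self x s) hxs
    · omega

/-- The starring construction, abbreviated. -/
def starC (X : Finset (Finset V)) (σ : Finset V) (v : V) : Finset (Finset V) :=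
  X.erase σ ∪ (σ.powerset.filter fun τ => τ ≠ σ).image fun τ => insert v τ

lemma starringOf_iff {X Y : Finset (Finset V)} :
    StarringOf X Y ↔ ∃ (σ : Finset V) (v : V), IsFacet X σ ∧ v ∉ vertexSet X ∧
      Y = starC X σ v := Iff.rfl

lemma mem_starC {X : Finset (Finset V)} {σ : Finset V} {v : V} {s : Finset V} :
    s ∈ starC X σ v ↔ (s ∈ X ∧ s ≠ σ) ∨ ∃ τ, τ ⊆ σ ∧ τ ≠ σ ∧ s = insert v τ := by
  constructor
  · intro h
    rcases Finset.mem_union.1 h with h | h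
    · exact Or.inl ⟨(Finset.mem_erase.1 h).2, (Finset.mem_erase.1 h).1⟩
    · obtain ⟨τ, hτ, rfl⟩ := Finset.mem_image.1 h
      rw [Finset.mem_filter, Finset.mem_powerset] at hτ
      exact Or.inr ⟨τ, hτ.1, hτ.2, rfl⟩
  · rintro (⟨h1, h2⟩ | ⟨τ, h1, h2, rfl⟩)
    · exact Finset.mem_union_left _ (Finset.mem_erase.2 ⟨h2, h1⟩)
    · exact Finset.mem_union_right _ (Finset.mem_image.2
        ⟨τ, Finset.mem_filter.2 ⟨Finset.mem_powerset.2 h1, h2⟩, rfl⟩)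

lemma starC_mem_X {X : Finset (Finset V)} {σ : Finset V} {v : V} {s : Finset V}
    (h1 : s ∈ X) (h2 : s ≠ σ) : s ∈ starC X σ v :=
  mem_starC.2 (Or.inl ⟨h1, h2⟩)

lemma starC_mem_ins {X : Finset (Finset V)} {σ : Finset V} {v : V} {τ : Finset V}
    (h1 : τ ⊆ σ) (h2 : τ ≠ σ) : insert v τ ∈ starC X σ v :=
  mem_starC.2 (Or.inr ⟨τ, h1, h2, rfl⟩)

lemma starC_not_mem {X : Finset (Finset V)} {σ : Finset V} {v : V}
    (hσ : σ ∈ X) (hv : v ∉ vertexSet X) : σ ∉ starC X σ v := by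
  intro h
  rcases mem_starC.1 h with ⟨_, h2⟩ | ⟨τ, h1, h2, h3⟩
  · exact h2 rfl
  · exact not_mem_of_not_vertex hv hσ (h3 ▸ Finset.mem_insert_self v τ)

lemma starC_of_v {X : Finset (Finset V)} {σ : Finset V} {v : V} {s : Finset V}
    (hσ : σ ∈ X) (hv : v ∉ vertexSet X) (h : s ∈ starC X σ v) (hvs : v ∈ s) :
    ∃ τ, τ ⊆ σ ∧ τ ≠ σ ∧ v ∉ τ ∧ s = insert v τ := by
  rcases mem_starC.1 h with ⟨h1, _⟩ | ⟨τ, h1, h2, h3⟩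
  · exact absurd hvs (not_mem_of_not_vertex hv h1)
  · exact ⟨τ, h1, h2, fun hvτ => not_mem_of_not_vertex hv hσ (h1 hvτ), h3⟩

lemma starC_of_not_v {X : Finset (Finset V)} {σ : Finset V} {v : V} {s : Finset V}
    (h : s ∈ starC X σ v) (hvs : v ∉ s) : s ∈ X ∧ s ≠ σ := by
  rcases mem_starC.1 h with h | ⟨τ, h1, h2, h3⟩
  · exact h
  · exact absurd (h3 ▸ Finset.mem_insert_self v τ) hvs

lemma unstar_eq {X : Finset (Finset V)} {σ : Finset V} {v : V}
    (hf : IsFacet X σ) (hv : v ∉ vertexSet X) :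
    X = insert σ ((starC X σ v).filter fun s => v ∉ s) := by
  ext s
  simp only [Finset.mem_insert, Finset.mem_filter]
  constructor
  · intro hs
    by_cases h : s = σ
    · exact Or.inl h
    · exact Or.inr ⟨starC_mem_X hs h, not_mem_of_not_vertex hv hs⟩
  · rintro (rfl | ⟨h1, h2⟩)
    · exact hf.1
    · exact (starC_of_not_v h1 h2).1

lemma starring_complex {X : Finset (Finset V)} {σ : Finset V} {v : V} {d : ℕ}
    (hXc : IsComplex X) (hf : IsFacet X σ) (hv : v ∉ vertexSet X) :
    IsComplex (starC X σ v) := by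
  constructor
  · intro s hs
    rcases mem_starC.1 hs with ⟨h1, _⟩ | ⟨τ, _, _, rfl⟩
    · exact hXc.1 s h1
    · exact Finset.insert_nonempty v τ
  · intro s hs t hts htne
    rcases mem_starC.1 hs with ⟨h1, h2⟩ | ⟨τ, h1, h2, rfl⟩
    · refine starC_mem_X (hXc.2 s h1 t hts htne) ?_
      rintro rfl
      exact h2 (hf.2 s h1 hts).symm
    · by_cases hvt : v ∈ t
      · have hsub : t.erase v ⊆ τ := by
          intro x hx
          rcases Finset.mem_insert.1 (hts (Finset.mem_of_mem_erase hx)) with h | h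
          · exact absurd h (Finset.ne_of_mem_erase hx)
          · exact h
        have : t.erase v ≠ σ := by
          intro hEq
          have h3 : σ ⊆ τ := hEq ▸ hsub
          exact h2 (Finset.Subset.antisymm h1 h3)
        have := starC_mem_ins (X := X) (v := v) (hsub.trans h1) this
        rwa [Finset.insert_erase hvt] at this
      · have hsub : t ⊆ τ := by
          intro x hx
          rcases Finset.mem_insert.1 (hts hx) with h | h
          · exact absurd (h ▸ hx) hvt
          · exact h
        refine starC_mem_X (hXc.2 σ hf.1 t (hsub.trans h1) htne) ?_
        rintro rfl
        exact h2 (Finset.Subset.antisymm h1 hsub)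

lemma starring_pure {X : Finset (Finset V)} {σ : Finset V} {v : V} {d : ℕ}
    (hXc : IsComplex X) (hXp : IsPure X d) (hf : IsFacet X σ) (hv : v ∉ vertexSet X) :
    IsPure (starC X σ v) d := by
  have hσne : σ.Nonempty := hXc.1 σ hf.1
  have hcardσ : σ.card = d + 1 := hXp.2 σ hf
  constructor
  · exact ⟨insert v ∅, starC_mem_ins (Finset.empty_subset σ)
      (fun h => hσne.ne_empty h.symm)⟩
  · rintro t ⟨htm, hmax⟩
    rcases mem_starC.1 htm with ⟨h1, h2⟩ | ⟨τ, h1, h2, rfl⟩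
    · obtain ⟨u, huf, htu⟩ := exists_facet h1
      by_cases huσ : u = σ
      · have htu' : t ⊆ σ := huσ ▸ htu
        have h4 : insert v t ∈ starC X σ v := starC_mem_ins htu' h2
        have h5 := hmax (insert v t) h4 (Finset.subset_insert v t)
        have hvt : v ∈ t := h5 ▸ Finset.mem_insert_self v t
        exact absurd hvt (not_mem_of_not_vertex hv h1)
      · have h4 : u ∈ starC X σ v := starC_mem_X huf.1 huσ
        rw [hmax u h4 htu]
        exact hXp.2 u huf
    · have hvτ : v ∉ τ := fun hvτ => not_mem_of_not_vertex hv hf.1 (h1 hvτ)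
      have hτlt : τ.card < σ.card := Finset.card_lt_card (h1.ssubset_of_ne h2)
      have hτd : τ.card = d := by
        rcases Nat.lt_or_ge τ.card d with hlt | hge
        · obtain ⟨x, hxσ, hxτ⟩ := Finset.exists_of_ssubset (h1.ssubset_of_ne h2)
          have hx_ne_v : x ≠ v := fun h => hv (h ▸ subset_vertexSet hf.1 hxσ)
          have hτ' : insert x τ ⊆ σ := Finset.insert_subset hxσ h1
          have hτ'ne : insert x τ ≠ σ := by
            intro hEq
            have : (insert x τ).card < σ.card := by
              rw [Finset.card_insert_of_notMem hxτ]; omega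
            rw [hEq] at this; omega
          have h4 : insert v (insert x τ) ∈ starC X σ v := starC_mem_ins hτ' hτ'ne
          have h5 := hmax (insert v (insert x τ)) h4
            (Finset.insert_subset_insert v (Finset.subset_insert x τ))
          have : x ∈ insert v τ := by
            rw [h5]
            exact Finset.mem_insert_of_mem (Finset.mem_insert_self x τ)
          rcases Finset.mem_insert.1 this with h | h
          · exact (hx_ne_v h).elim
          · exact (hxτ h).elim
        · omega
      rw [Finset.card_insert_of_notMem hvτ, hτd]

lemma chain_Q {d : ℕ} {S K : Finset (Finset V)}
    (h : Relation.ReflTransGen StarringOf S K) (hS : IsComplex S ∧ IsPure S d) :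
    IsComplex K ∧ IsPure K d := by
  induction h with
  | refl => exact hS
  | tail h2 step ih =>
    obtain ⟨σ, v, hfa, hva, hE⟩ := step
    rw [show _ = starC _ σ v from hE]
    exact ⟨starring_complex (d := d) ih.1 hfa hva, starring_pure ih.1 ih.2 hfa hva⟩

end Aux


section Perm

variable (e : V ≃ V)

/-- Relabelling a complex by a permutation of the vertices. -/
def mapC (K : Finset (Finset V)) : Finset (Finset V) :=
  K.image fun s => s.image (e : V → V)

lemma image_symm_image (t : Finset V) : (t.image (e : V → V)).image (e.symm : V → V) = t := by
  rw [Finset.image_image]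
  simp

lemma image_image_symm (t : Finset V) : (t.image (e.symm : V → V)).image (e : V → V) = t := by
  rw [Finset.image_image]
  simp

lemma mem_mapC {K : Finset (Finset V)} {t : Finset V} :
    t ∈ mapC e K ↔ t.image (e.symm : V → V) ∈ K := by
  simp only [mapC, Finset.mem_image]
  constructor
  · rintro ⟨s, hs, rfl⟩
    rwa [image_symm_image]
  · intro h
    exact ⟨t.image (e.symm : V → V), h, image_image_symm e t⟩

lemma mapC_mem {K : Finset (Finset V)} {s : Finset V} (h : s ∈ K) :
    s.image (e : V → V) ∈ mapC e K :=
  Finset.mem_image_of_mem _ h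

lemma mem_mapC' {e : V ≃ V} {K : Finset (Finset V)} {t : Finset V} :
    t ∈ mapC e K ↔ ∃ s ∈ K, s.image (e : V → V) = t := by
  simp [mapC, Finset.mem_image]

lemma image_subset_iff_e {s t : Finset V} :
    s.image (e : V → V) ⊆ t.image (e : V → V) ↔ s ⊆ t :=
  Finset.image_subset_image_iff e.injective

lemma image_inj_e {s t : Finset V} :
    s.image (e : V → V) = t.image (e : V → V) ↔ s = t :=
  ⟨fun h => by rw [← image_symm_image e s, h, image_symm_image], fun h => h ▸ rfl⟩

lemma vertexSet_mapC (K : Finset (Finset V)) :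
    vertexSet (mapC e K) = (vertexSet K).image (e : V → V) := by
  ext x
  rw [mem_vertexSet_iff]
  constructor
  · rintro ⟨t, ht, hx⟩
    rw [mem_mapC] at ht
    have : e.symm x ∈ t.image (e.symm : V → V) := Finset.mem_image_of_mem _ hx
    have hxv : e.symm x ∈ vertexSet K := subset_vertexSet ht this
    exact Finset.mem_image.2 ⟨e.symm x, hxv, e.apply_symm_apply x⟩
  · intro hx
    obtain ⟨y, hy, rfl⟩ := Finset.mem_image.1 hx
    obtain ⟨s, hs, hys⟩ := mem_vertexSet_iff.1 hy
    exact ⟨s.image (e : V → V), mapC_mem e hs, Finset.mem_image_of_mem _ hys⟩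

lemma isFacet_mapC {K : Finset (Finset V)} {s : Finset V} (h : IsFacet K s) :
    IsFacet (mapC e K) (s.image (e : V → V)) := by
  refine ⟨mapC_mem e h.1, ?_⟩
  intro t ht hsub
  rw [mem_mapC] at ht
  have h2 : s ⊆ t.image (e.symm : V → V) := by
    have := Finset.image_subset_image (f := (e.symm : V → V)) hsub
    rwa [image_symm_image] at this
  have h3 := h.2 _ ht h2
  rw [h3, image_image_symm]

lemma mapC_erase (K : Finset (Finset V)) (σ : Finset V) :
    mapC e (K.erase σ) = (mapC e K).erase (σ.image (e : V → V)) := by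
  ext t
  rw [mem_mapC, Finset.mem_erase, Finset.mem_erase, mem_mapC]
  constructor
  · rintro ⟨h1, h2⟩
    refine ⟨?_, h2⟩
    rintro rfl
    rw [image_symm_image] at h1
    exact h1 rfl
  · rintro ⟨h1, h2⟩
    refine ⟨?_, h2⟩
    intro hEq
    apply h1
    rw [← hEq, image_image_symm]

lemma mapC_powerset_filter (σ : Finset V) :
    mapC e (σ.powerset.filter fun τ => τ ≠ σ) =
      (σ.image (e : V → V)).powerset.filter fun τ => τ ≠ σ.image (e : V → V) := by
  ext t
  rw [mem_mapC, Finset.mem_filter, Finset.mem_filter, Finset.mem_powerset, Finset.mem_powerset]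
  constructor
  · rintro ⟨h1, h2⟩
    constructor
    · intro x hx
      have : e.symm x ∈ σ := h1 (Finset.mem_image_of_mem _ hx)
      exact Finset.mem_image.2 ⟨e.symm x, this, e.apply_symm_apply x⟩
    · rintro rfl
      rw [image_symm_image] at h2
      exact h2 rfl
  · rintro ⟨h1, h2⟩
    constructor
    · intro x hx
      obtain ⟨y, hy, rfl⟩ := Finset.mem_image.1 hx
      obtain ⟨z, hz, hze⟩ := Finset.mem_image.1 (h1 hy)
      rw [← hze, Equiv.symm_apply_apply]
      exact hz
    · intro hEq
      apply h2
      rw [← hEq, image_image_symm]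

lemma mapC_union (K L : Finset (Finset V)) :
    mapC e (K ∪ L) = mapC e K ∪ mapC e L := Finset.image_union _ _

lemma mapC_image_insert (P : Finset (Finset V)) (v : V) :
    mapC e (P.image fun τ => insert v τ) =
      (mapC e P).image fun τ => insert (e v) τ := by
  unfold mapC
  rw [Finset.image_image, Finset.image_image]
  apply Finset.image_congr
  intro τ _
  simp [Finset.image_insert]

lemma mapC_starring {X Y : Finset (Finset V)} (h : StarringOf X Y) :
    StarringOf (mapC e X) (mapC e Y) := by
  obtain ⟨σ, v, hf, hv, rfl⟩ := h
  refine ⟨σ.image (e : V → V), e v, isFacet_mapC e hf, ?_, ?_⟩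
  · rw [vertexSet_mapC]
    intro hmem
    obtain ⟨y, hy, hye⟩ := Finset.mem_image.1 hmem
    exact hv (e.injective hye ▸ hy)
  · show mapC e (starC X σ v) = _
    unfold starC
    rw [mapC_union, mapC_erase, mapC_image_insert, mapC_powerset_filter]

lemma mapC_std {S : Finset (Finset V)} {d : ℕ} (h : IsStandardSphere S d) :
    IsStandardSphere (mapC e S) d := by
  obtain ⟨A, hA, rfl⟩ := h
  refine ⟨A.image (e : V → V), by rw [Finset.card_image_of_injective _ e.injective]; exact hA, ?_⟩
  ext t
  rw [mem_mapC, Finset.mem_filter, Finset.mem_filter, Finset.mem_powerset, Finset.mem_powerset]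
  constructor
  · rintro ⟨h1, h2, h3⟩
    refine ⟨?_, ?_, ?_⟩
    · intro x hx
      have : e.symm x ∈ A := h1 (Finset.mem_image_of_mem _ hx)
      exact Finset.mem_image.2 ⟨e.symm x, this, e.apply_symm_apply x⟩
    · obtain ⟨x, hx⟩ := h2
      obtain ⟨y, hy, rfl⟩ := Finset.mem_image.1 hx
      exact ⟨y, hy⟩
    · rintro rfl
      rw [image_symm_image] at h3
      exact h3 rfl
  · rintro ⟨h1, h2, h3⟩
    refine ⟨?_, ?_, ?_⟩
    · intro x hx
      obtain ⟨y, hy, rfl⟩ := Finset.mem_image.1 hx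
      obtain ⟨z, hz, hze⟩ := Finset.mem_image.1 (h1 hy)
      rw [← hze, Equiv.symm_apply_apply]
      exact hz
    · obtain ⟨x, hx⟩ := h2
      exact ⟨e.symm x, Finset.mem_image_of_mem _ hx⟩
    · intro hEq
      apply h3
      rw [← hEq, image_image_symm]

lemma mapC_stacked {K : Finset (Finset V)} {d : ℕ} (h : IsStackedSphere K d) :
    IsStackedSphere (mapC e K) d := by
  obtain ⟨S, hS, hchain⟩ := h
  exact ⟨mapC e S, mapC_std e hS,
    hchain.lift (mapC e) (fun a b hab => mapC_starring e hab)⟩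

lemma image_swap_id {v₁ v₂ : V} {s : Finset V} (h1 : v₁ ∉ s) (h2 : v₂ ∉ s) :
    s.image ((Equiv.swap v₁ v₂ : V ≃ V) : V → V) = s := by
  have : s.image ((Equiv.swap v₁ v₂ : V ≃ V) : V → V) = s.image id := by
    apply Finset.image_congr
    intro x hx
    exact Equiv.swap_apply_of_ne_of_ne (fun h => h1 (h ▸ hx)) (fun h => h2 (h ▸ hx))
  rw [this, Finset.image_id]

end Perm


section Core

/-- If the starrings of two complexes at a common new vertex agree, the starred facets
coincide (one inclusion). -/
lemma starC_sub_facet {X Z : Finset (Finset V)} {σ₁ σ₂ : Finset V} {v : V} {d : ℕ} (hd : 1 ≤ d)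
    (hZp : IsPure Z d) (hf1 : IsFacet Z σ₁) (hv1 : v ∉ vertexSet Z)
    (hf2 : IsFacet X σ₂) (hv2 : v ∉ vertexSet X)
    (hE : starC Z σ₁ v = starC X σ₂ v) : σ₁ ⊆ σ₂ := by
  intro x hx
  have hc1 : σ₁.card = d + 1 := hZp.2 σ₁ hf1
  obtain ⟨y, hy⟩ : (σ₁.erase x).Nonempty := by
    apply Finset.card_pos.1
    rw [Finset.card_erase_of_mem hx, hc1]
    omega
  have h1 : σ₁.erase y ⊆ σ₁ := Finset.erase_subset y σ₁
  have h2 : σ₁.erase y ≠ σ₁ := by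
    intro hEq
    have hy' : y ∈ σ₁ := Finset.mem_of_mem_erase hy
    rw [← hEq] at hy'
    exact (Finset.mem_erase.1 hy').1 rfl
  have hmem := starC_mem_ins (X := Z) (v := v) h1 h2
  rw [hE] at hmem
  obtain ⟨ρ, hρσ, _, hvρ, hEq⟩ := starC_of_v hf2.1 hv2 hmem (Finset.mem_insert_self _ _)
  have hvτ : v ∉ σ₁.erase y :=
    fun h => not_mem_of_not_vertex hv1 hf1.1 (Finset.mem_of_mem_erase h)
  have herase : σ₁.erase y = ρ := by
    have h3 := congrArg (fun s => Finset.erase s v) hEq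
    simpa [Finset.erase_insert hvτ, Finset.erase_insert hvρ] using h3
  have hxε : x ∈ σ₁.erase y :=
    Finset.mem_erase.2 ⟨Ne.symm (Finset.mem_erase.1 hy).1, hx⟩
  exact hρσ (herase ▸ hxε)

/-- Un-starring is unique: if starring `Z` and `X` at the same new vertex gives the same
complex, then `X = Z`. -/
lemma double_star_same_v {X Z : Finset (Finset V)} {σ₁ σ₂ : Finset V} {v : V} {d : ℕ}
    (hd : 1 ≤ d) (hXp : IsPure X d) (hZp : IsPure Z d)
    (hf1 : IsFacet Z σ₁) (hv1 : v ∉ vertexSet Z)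
    (hf2 : IsFacet X σ₂) (hv2 : v ∉ vertexSet X)
    (hE : starC Z σ₁ v = starC X σ₂ v) : X = Z := by
  have hσ : σ₁ = σ₂ :=
    Finset.Subset.antisymm (starC_sub_facet hd hZp hf1 hv1 hf2 hv2 hE)
      (starC_sub_facet hd hXp hf2 hv2 hf1 hv1 hE.symm)
  ext s
  constructor
  · intro hs
    by_cases hsσ : s = σ₂
    · rw [hsσ, ← hσ]
      exact hf1.1
    · have h1 : s ∈ starC X σ₂ v := starC_mem_X hs hsσ
      rw [← hE] at h1
      exact (starC_of_not_v h1 (not_mem_of_not_vertex hv2 hs)).1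
  · intro hs
    by_cases hsσ : s = σ₁
    · rw [hsσ, hσ]
      exact hf2.1
    · have h1 : s ∈ starC Z σ₁ v := starC_mem_X hs hsσ
      rw [hE] at h1
      exact (starC_of_not_v h1 (not_mem_of_not_vertex hv1 hs)).1

/-- If two distinct new vertices starred into facets give the same complex, the first new
vertex is not in the second facet. -/
lemma double_star_not_mem {X Z : Finset (Finset V)} {σ₁ σ₂ : Finset V} {v₁ v₂ : V} {d : ℕ}
    (hd : 2 ≤ d) (hXc : IsComplex X) (hXp : IsPure X d) (hZp : IsPure Z d)
    (hf1 : IsFacet Z σ₁) (hv1 : v₁ ∉ vertexSet Z)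
    (hf2 : IsFacet X σ₂) (hv2 : v₂ ∉ vertexSet X)
    (hE : starC Z σ₁ v₁ = starC X σ₂ v₂) (hne : v₁ ≠ v₂) : v₁ ∉ σ₂ := by
  intro hmem
  have hc2 : σ₂.card = d + 1 := hXp.2 σ₂ hf2
  have hc1 : σ₁.card = d + 1 := hZp.2 σ₁ hf1
  have hv2σ2 : v₂ ∉ σ₂ := not_mem_of_not_vertex hv2 hf2.1
  have key : ∀ x ∈ σ₂, x ≠ v₁ → x ∈ σ₁ ∧ v₂ ∈ σ₁ := by
    intro x hx hxv
    have hp : ({v₁, x} : Finset V) ⊆ σ₂ := by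
      intro y hy
      rcases Finset.mem_insert.1 hy with rfl | hy
      · exact hmem
      · exact (Finset.mem_singleton.1 hy) ▸ hx
    have hpne : ({v₁, x} : Finset V) ≠ σ₂ := by
      intro hEq
      have h2 : ({v₁, x} : Finset V).card ≤ 2 := by
        apply le_trans (Finset.card_insert_le v₁ {x})
        simp
      rw [hEq, hc2] at h2
      omega
    have hs : insert v₂ {v₁, x} ∈ starC X σ₂ v₂ := starC_mem_ins hp hpne
    rw [← hE] at hs
    have hv1s : v₁ ∈ insert v₂ ({v₁, x} : Finset V) :=
      Finset.mem_insert_of_mem (Finset.mem_insert_self v₁ {x})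
    obtain ⟨τ, hτσ, hτne, hv1τ, hsτ⟩ := starC_of_v hf1.1 hv1 hs hv1s
    have hv2τ : v₂ ∈ τ := by
      have h3 : v₂ ∈ insert v₁ τ := hsτ ▸ Finset.mem_insert_self v₂ {v₁, x}
      rcases Finset.mem_insert.1 h3 with h | h
      · exact absurd h.symm hne
      · exact h
    have hxτ : x ∈ τ := by
      have hxins : x ∈ insert v₂ ({v₁, x} : Finset V) := by simp
      have h3 : x ∈ insert v₁ τ := hsτ ▸ hxins
      rcases Finset.mem_insert.1 h3 with h | h
      · exact absurd h hxv
      · exact h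
    exact ⟨hτσ hxτ, hτσ hv2τ⟩
  obtain ⟨x₀, hx₀⟩ : (σ₂.erase v₁).Nonempty := by
    apply Finset.card_pos.1
    rw [Finset.card_erase_of_mem hmem, hc2]
    omega
  have hv2σ1 : v₂ ∈ σ₁ :=
    (key x₀ (Finset.mem_of_mem_erase hx₀) (Finset.ne_of_mem_erase hx₀)).2
  have hsub : insert v₂ (σ₂.erase v₁) ⊆ σ₁ := by
    intro y hy
    rcases Finset.mem_insert.1 hy with rfl | hy
    · exact hv2σ1
    · exact (key y (Finset.mem_of_mem_erase hy) (Finset.ne_of_mem_erase hy)).1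
  have hcard : σ₁.card ≤ (insert v₂ (σ₂.erase v₁)).card := by
    rw [Finset.card_insert_of_notMem (fun h => hv2σ2 (Finset.mem_of_mem_erase h)),
      Finset.card_erase_of_mem hmem, hc2, hc1]
    omega
  have hEq : insert v₂ (σ₂.erase v₁) = σ₁ := Finset.eq_of_subset_of_card_le hsub hcard
  have h1 : σ₂.erase v₁ ⊆ σ₁ := by
    intro y hy
    rw [← hEq]
    exact Finset.mem_insert_of_mem hy
  have h2 : σ₂.erase v₁ ≠ σ₁ := by
    intro hEq2
    rw [← hEq2] at hv2σ1
    exact hv2σ2 (Finset.mem_of_mem_erase hv2σ1)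
  have hmem2 : insert v₁ (σ₂.erase v₁) ∈ starC Z σ₁ v₁ := starC_mem_ins h1 h2
  rw [Finset.insert_erase hmem, hE] at hmem2
  exact starC_not_mem hf2.1 hv2 hmem2

/-- Starring two distinct new vertices into the same facet: the results differ by the
transposition of the two vertices. -/
lemma double_star_same_facet {X Z : Finset (Finset V)} {σ : Finset V} {v₁ v₂ : V}
    (hf1 : IsFacet Z σ) (hv1 : v₁ ∉ vertexSet Z)
    (hf2 : IsFacet X σ) (hv2 : v₂ ∉ vertexSet X)
    (hE : starC Z σ v₁ = starC X σ v₂) (hne : v₁ ≠ v₂) :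
    X = mapC (Equiv.swap v₁ v₂) Z := by
  set e : V ≃ V := Equiv.swap v₁ v₂ with he
  have hv1σ : v₁ ∉ σ := not_mem_of_not_vertex hv1 hf1.1
  have hv2σ : v₂ ∉ σ := not_mem_of_not_vertex hv2 hf2.1
  have hfilter : mapC e ((starC Z σ v₁).filter fun s => v₁ ∉ s)
      = (starC X σ v₂).filter fun s => v₂ ∉ s := by
    ext t
    rw [Finset.mem_filter]
    constructor
    · intro ht
      obtain ⟨s, hs, rfl⟩ := mem_mapC'.1 ht
      rw [Finset.mem_filter] at hs
      obtain ⟨hsY, hv1s⟩ := hs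
      by_cases hv2s : v₂ ∈ s
      · obtain ⟨ρ, hρσ, hρne, hv2ρ, rfl⟩ := starC_of_v hf2.1 hv2 (hE ▸ hsY) hv2s
        have hv1ρ : v₁ ∉ ρ := fun h => hv1σ (hρσ h)
        have himg : (insert v₂ ρ).image (e : V → V) = insert v₁ ρ := by
          rw [Finset.image_insert, image_swap_id hv1ρ hv2ρ, he]
          simp [Equiv.swap_apply_right]
        rw [himg]
        refine ⟨by rw [← hE]; exact starC_mem_ins hρσ hρne, ?_⟩
        intro h
        rcases Finset.mem_insert.1 h with h | h
        · exact hne h.symm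
        · exact hv2ρ h
      · have himg : s.image (e : V → V) = s := image_swap_id hv1s hv2s
        rw [himg]
        exact ⟨hE ▸ hsY, hv2s⟩
    · rintro ⟨htY, hv2t⟩
      by_cases hv1t : v₁ ∈ t
      · obtain ⟨τ, hτσ, hτne, hv1τ, rfl⟩ := starC_of_v hf1.1 hv1 (hE.symm ▸ htY) hv1t
        refine mem_mapC'.2 ⟨insert v₂ τ, Finset.mem_filter.2 ⟨?_, ?_⟩, ?_⟩
        · rw [hE]
          exact starC_mem_ins hτσ hτne
        · intro h
          rcases Finset.mem_insert.1 h with h | h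
          · exact hne h
          · exact hv1τ h
        · have hv2τ : v₂ ∉ τ := fun h => hv2σ (hτσ h)
          rw [Finset.image_insert, image_swap_id hv1τ hv2τ, he]
          simp [Equiv.swap_apply_left]
      · exact mem_mapC'.2 ⟨t, Finset.mem_filter.2 ⟨hE.symm ▸ htY, hv1t⟩,
          image_swap_id hv1t hv2t⟩
  have hins : mapC e (insert σ ((starC Z σ v₁).filter fun s => v₁ ∉ s))
      = insert σ ((starC X σ v₂).filter fun s => v₂ ∉ s) := by
    unfold mapC
    rw [Finset.image_insert, image_swap_id hv1σ hv2σ]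
    have : ((starC Z σ v₁).filter fun s => v₁ ∉ s).image (fun s => s.image (e : V → V))
        = mapC e ((starC Z σ v₁).filter fun s => v₁ ∉ s) := rfl
    rw [this, hfilter]
  rw [unstar_eq hf2 hv2]
  conv_rhs => rw [unstar_eq hf1 hv1]
  rw [hins]

/-- The commuting-stars construction: if `Y = starC Z σ₁ v₁ = starC X σ₂ v₂` with
`v₁ ≠ v₂` and `σ₁ ≠ σ₂`, then the complex `W` replacing both starred vertices by the
original facets un-stars `Z` (and symmetrically `X`). -/
lemma unstar_double {X Z W : Finset (Finset V)} {σ₁ σ₂ : Finset V} {v₁ v₂ : V} {d : ℕ}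
    (hd : 2 ≤ d) (hXc : IsComplex X) (hXp : IsPure X d)
    (hZc : IsComplex Z) (hZp : IsPure Z d)
    (hf1 : IsFacet Z σ₁) (hv1 : v₁ ∉ vertexSet Z)
    (hf2 : IsFacet X σ₂) (hv2 : v₂ ∉ vertexSet X)
    (hE : starC Z σ₁ v₁ = starC X σ₂ v₂) (hne : v₁ ≠ v₂) (hσ : σ₁ ≠ σ₂)
    (hW : ∀ s, s ∈ W ↔ s = σ₁ ∨ s = σ₂ ∨ (s ∈ starC Z σ₁ v₁ ∧ v₁ ∉ s ∧ v₂ ∉ s)) :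
    IsComplex W ∧ IsPure W d ∧ IsFacet W σ₂ ∧ v₂ ∉ vertexSet W ∧ Z = starC W σ₂ v₂ := by
  have hYc : IsComplex (starC Z σ₁ v₁) := starring_complex (d := d) hZc hf1 hv1
  have hYp : IsPure (starC Z σ₁ v₁) d := starring_pure hZc hZp hf1 hv1
  have hc1 : σ₁.card = d + 1 := hZp.2 σ₁ hf1
  have hc2 : σ₂.card = d + 1 := hXp.2 σ₂ hf2
  have nm12 : v₁ ∉ σ₂ := double_star_not_mem hd hXc hXp hZp hf1 hv1 hf2 hv2 hE hne
  have nm21 : v₂ ∉ σ₁ :=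
    double_star_not_mem hd hZc hZp hXp hf2 hv2 hf1 hv1 hE.symm (Ne.symm hne)
  have hv1σ1 : v₁ ∉ σ₁ := not_mem_of_not_vertex hv1 hf1.1
  have hv2σ2 : v₂ ∉ σ₂ := not_mem_of_not_vertex hv2 hf2.1
  have hσ₂Y : σ₂ ∉ starC Z σ₁ v₁ := by
    rw [hE]
    exact starC_not_mem hf2.1 hv2
  have hσ₁Y : σ₁ ∉ starC Z σ₁ v₁ := starC_not_mem hf1.1 hv1
  have hσ₁W : σ₁ ∈ W := (hW σ₁).2 (Or.inl rfl)
  have hσ₂W : σ₂ ∈ W := (hW σ₂).2 (Or.inr (Or.inl rfl))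
  have hWc : IsComplex W := by
    constructor
    · intro s hs
      rcases (hW s).1 hs with hEq | hEq | h
      · exact hEq ▸ hZc.1 σ₁ hf1.1
      · exact hEq ▸ hXc.1 σ₂ hf2.1
      · exact hYc.1 s h.1
    · intro s hs t hts htne
      rcases (hW s).1 hs with hEq | hEq | ⟨hsY, h1, h2⟩
      · rw [hEq] at hts
        by_cases htσ : t = σ₁
        · exact htσ ▸ hσ₁W
        · refine (hW t).2 (Or.inr (Or.inr ⟨starC_mem_X (hZc.2 σ₁ hf1.1 t hts htne) htσ,
            fun h => hv1σ1 (hts h), fun h => nm21 (hts h)⟩))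
      · rw [hEq] at hts
        by_cases htσ : t = σ₂
        · exact htσ ▸ hσ₂W
        · refine (hW t).2 (Or.inr (Or.inr ⟨?_, fun h => nm12 (hts h),
            fun h => hv2σ2 (hts h)⟩))
          rw [hE]
          exact starC_mem_X (hXc.2 σ₂ hf2.1 t hts htne) htσ
      · exact (hW t).2 (Or.inr (Or.inr ⟨hYc.2 s hsY t hts htne,
          fun h => h1 (hts h), fun h => h2 (hts h)⟩))
  have hWp : IsPure W d := by
    constructor
    · exact ⟨σ₁, hσ₁W⟩
    · rintro t ⟨htW, hmax⟩
      rcases (hW t).1 htW with hEq | hEq | ⟨htY, h1, h2⟩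
      · rw [hEq, hc1]
      · rw [hEq, hc2]
      · obtain ⟨u, huf, htu⟩ := exists_facet htY
        by_cases hv1u : v₁ ∈ u
        · obtain ⟨τ, hτσ, _, _, rfl⟩ := starC_of_v hf1.1 hv1 huf.1 hv1u
          have htσ1 : t ⊆ σ₁ := by
            intro x hx
            rcases Finset.mem_insert.1 (htu hx) with rfl | h
            · exact absurd hx h1
            · exact hτσ h
          rw [hmax σ₁ hσ₁W htσ1]
          exact hc1
        · by_cases hv2u : v₂ ∈ u
          · have huf2 : u ∈ starC X σ₂ v₂ := hE ▸ huf.1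
            obtain ⟨ρ, hρσ, _, _, rfl⟩ := starC_of_v hf2.1 hv2 huf2 hv2u
            have htσ2 : t ⊆ σ₂ := by
              intro x hx
              rcases Finset.mem_insert.1 (htu hx) with rfl | h
              · exact absurd hx h2
              · exact hρσ h
            rw [hmax σ₂ hσ₂W htσ2]
            exact hc2
          · have huW : u ∈ W := (hW u).2 (Or.inr (Or.inr ⟨huf.1, hv1u, hv2u⟩))
            rw [hmax u huW htu]
            exact hYp.2 u huf
  have hWfac2 : IsFacet W σ₂ := by
    refine ⟨hσ₂W, ?_⟩
    intro t htW hsub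
    rcases (hW t).1 htW with hEq | hEq | ⟨htY, _, _⟩
    · rw [hEq] at hsub ⊢
      exact Finset.eq_of_subset_of_card_le hsub (by rw [hc1, hc2])
    · exact hEq.symm
    · exact Finset.eq_of_subset_of_card_le hsub (by rw [hc2]; exact card_face_le hYp htY)
  have hWv2 : v₂ ∉ vertexSet W := by
    intro hx
    obtain ⟨s, hsW, hv2s⟩ := mem_vertexSet_iff.1 hx
    rcases (hW s).1 hsW with hEq | hEq | h
    · exact nm21 (hEq ▸ hv2s)
    · exact hv2σ2 (hEq ▸ hv2s)
    · exact h.2.2 hv2s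
  refine ⟨hWc, hWp, hWfac2, hWv2, ?_⟩
  have hZmem : ∀ s, s ∈ Z ↔ s = σ₁ ∨ (s ∈ starC Z σ₁ v₁ ∧ v₁ ∉ s) := by
    intro s
    constructor
    · intro hs
      by_cases h : s = σ₁
      · exact Or.inl h
      · exact Or.inr ⟨starC_mem_X hs h, not_mem_of_not_vertex hv1 hs⟩
    · rintro (rfl | ⟨h1, h2⟩)
      · exact hf1.1
      · exact (starC_of_not_v h1 h2).1
  apply Finset.ext
  intro s
  rw [hZmem s]
  constructor
  · rintro (hEq | ⟨hsY, hv1s⟩)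
    · rw [hEq]
      exact starC_mem_X hσ₁W hσ
    · by_cases hv2s : v₂ ∈ s
      · obtain ⟨ρ, hρσ, hρne, _, hEq2⟩ := starC_of_v hf2.1 hv2 (hE ▸ hsY) hv2s
        rw [hEq2]
        exact starC_mem_ins hρσ hρne
      · exact starC_mem_X ((hW s).2 (Or.inr (Or.inr ⟨hsY, hv1s, hv2s⟩)))
          (fun hEq => hσ₂Y (hEq ▸ hsY))
  · intro hs
    by_cases hv2s : v₂ ∈ s
    · obtain ⟨ρ, hρσ, hρne, hv2ρ, hEq2⟩ := starC_of_v hσ₂W hWv2 hs hv2s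
      refine Or.inr ⟨?_, ?_⟩
      · rw [hEq2, hE]
        exact starC_mem_ins hρσ hρne
      · rw [hEq2]
        intro hcontra
        rcases Finset.mem_insert.1 hcontra with h | h
        · exact hne h
        · exact nm12 (hρσ h)
    · obtain ⟨hsW, hsne⟩ := starC_of_not_v hs hv2s
      rcases (hW s).1 hsW with hEq | hEq | ⟨hsY, h1, _⟩
      · exact Or.inl hEq
      · exact absurd hEq hsne
      · exact Or.inr ⟨hsY, h1⟩

/-- The key lemma: anything that stars onto a stacked sphere is itself stacked. -/
lemma main_lemma {d : ℕ} (hd : 2 ≤ d) {S Y : Finset (Finset V)} (hS : IsStandardSphere S d)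
    (hchain : Relation.ReflTransGen StarringOf S Y) :
    ∀ X σ v, IsComplex X → IsPure X d → IsFacet X σ → v ∉ vertexSet X →
      Y = starC X σ v → IsStackedSphere X d := by
  induction hchain with
  | refl =>
    intro X σ v hXc hXp hf hv hE
    exfalso
    obtain ⟨A, hA, hSA⟩ := hS
    have hσne : σ.Nonempty := hXc.1 σ hf.1
    have hcσ : σ.card = d + 1 := hXp.2 σ hf
    have hvA : v ∈ A := by
      have h1 : insert v ∅ ∈ starC X σ v :=
        starC_mem_ins (Finset.empty_subset σ) (fun h => hσne.ne_empty h.symm)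
      have h2 : ({v} : Finset V) ∈ S := by
        rw [hE]
        simpa using h1
      rw [hSA] at h2
      exact Finset.mem_powerset.1 (Finset.mem_filter.1 h2).1 (Finset.mem_singleton_self v)
    have hσA : σ ⊆ A.erase v := by
      intro x hx
      have hxv : x ≠ v := fun h => (not_mem_of_not_vertex hv hf.1) (h ▸ hx)
      have hxX : ({x} : Finset V) ∈ X :=
        hXc.2 σ hf.1 {x} (Finset.singleton_subset_iff.2 hx) (Finset.singleton_nonempty x)
      have hxσ : ({x} : Finset V) ≠ σ := by
        intro h
        rw [← h] at hcσ
        simp at hcσ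
        omega
      have h3 : ({x} : Finset V) ∈ S := by
        rw [hE]
        exact starC_mem_X hxX hxσ
      rw [hSA] at h3
      have h4 := Finset.mem_powerset.1 (Finset.mem_filter.1 h3).1 (Finset.mem_singleton_self x)
      exact Finset.mem_erase.2 ⟨hxv, h4⟩
    have hcard : (A.erase v).card ≤ σ.card := by
      rw [Finset.card_erase_of_mem hvA, hA, hcσ]
      omega
    have hσeq : σ = A.erase v := Finset.eq_of_subset_of_card_le hσA hcard
    have hσS : σ ∈ S := by
      rw [hSA]
      refine Finset.mem_filter.2 ⟨Finset.mem_powerset.2 ?_, hσne, ?_⟩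
      · rw [hσeq]
        exact Finset.erase_subset v A
      · intro h
        have hvσ : v ∈ σ := by rw [h]; exact hvA
        rw [hσeq] at hvσ
        exact (Finset.mem_erase.1 hvσ).1 rfl
    rw [hE] at hσS
    exact starC_not_mem hf.1 hv hσS
  | @tail Z Y' h step ih =>
    intro X σ₂ v₂ hXc hXp hf2 hv2 hE2
    obtain ⟨σ₁, v₁, hf1, hv1, hE1⟩ := step
    have hQZ : IsComplex Z ∧ IsPure Z d := chain_Q (d := d) h ⟨std_complex hS, std_pure hS⟩
    have hZstacked : IsStackedSphere Z d := ⟨S, hS, h⟩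
    have hE1' : Y' = starC Z σ₁ v₁ := hE1
    have hE : starC Z σ₁ v₁ = starC X σ₂ v₂ := hE1'.symm.trans hE2
    by_cases hv : v₁ = v₂
    · subst hv
      have hXZ : X = Z :=
        double_star_same_v (by omega) hXp hQZ.2 hf1 hv1 hf2 hv2 hE
      rw [hXZ]
      exact hZstacked
    · by_cases hσ : σ₁ = σ₂
      · subst hσ
        have hXeq : X = mapC (Equiv.swap v₁ v₂) Z :=
          double_star_same_facet hf1 hv1 hf2 hv2 hE hv
        rw [hXeq]
        exact mapC_stacked _ hZstacked
      · set W := insert σ₁ (insert σ₂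
          ((starC Z σ₁ v₁).filter fun s => v₁ ∉ s ∧ v₂ ∉ s)) with hWdef
        have hWmem : ∀ s, s ∈ W ↔ s = σ₁ ∨ s = σ₂ ∨
            (s ∈ starC Z σ₁ v₁ ∧ v₁ ∉ s ∧ v₂ ∉ s) := by
          intro s
          simp only [hWdef, Finset.mem_insert, Finset.mem_filter]
          try tauto
        obtain ⟨hWc, hWp, hWfac2, hWv2, hZW⟩ :=
          unstar_double hd hXc hXp hQZ.1 hQZ.2 hf1 hv1 hf2 hv2 hE hv hσ hWmem
        have hWmem' : ∀ s, s ∈ W ↔ s = σ₂ ∨ s = σ₁ ∨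
            (s ∈ starC X σ₂ v₂ ∧ v₂ ∉ s ∧ v₁ ∉ s) := by
          intro s
          rw [hWmem s, ← hE]
          tauto
        obtain ⟨_, _, hWfac1, hWv1, hXW⟩ :=
          unstar_double hd hQZ.1 hQZ.2 hXc hXp hf2 hv2 hf1 hv1 hE.symm
            (Ne.symm hv) (Ne.symm hσ) hWmem'
        obtain ⟨S', hS', hchain'⟩ := ih W σ₂ v₂ hWc hWp hWfac2 hWv2 hZW
        exact ⟨S', hS', hchain'.tail ⟨σ₁, v₁, hWfac1, hWv1, hXW⟩⟩

end Core

/-- If the normal `d`-pseudomanifold `Y` is obtained from the normal `d`-pseudomanifold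
`X` by starring a new vertex in a facet, then `Y` is a stacked `d`-sphere iff `X` is. -/
theorem stmt9 {V : Type} [DecidableEq V] (d : ℕ) (hd : 2 ≤ d)
    (X Y : Finset (Finset V)) (hX : IsNormalPM X d) (hY : IsNormalPM Y d)
    (hXY : StarringOf X Y) :
    IsStackedSphere Y d ↔ IsStackedSphere X d := by
  constructor
  · rintro ⟨S, hS, hchain⟩
    obtain ⟨σ, v, hf, hv, hE⟩ := hXY
    exact main_lemma hd hS hchain X σ v hX.1.1 hX.1.2.1 hf hv hE
  · rintro ⟨S, hS, hchain⟩
    exact ⟨S, hS, hchain.tail hXY⟩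

end
end

section
/- For $d \geq 2$, the link of any vertex in a stacked $d$-sphere is a stacked $(d-1)$-sphere. -/
open Finset

noncomputable section

attribute [local instance] Classical.propDecidable

variable {V : Type} [DecidableEq V]

namespace Stmt10Aux

variable {V : Type} [DecidableEq V]

lemma mem_vertexSet_iff {K : Finset (Finset V)} {x : V} :
    x ∈ vertexSet K ↔ ∃ s ∈ K, x ∈ s := by
  simp [vertexSet, Finset.mem_sup]

lemma subset_vertexSet {K : Finset (Finset V)} {s : Finset V} (hs : s ∈ K) :
    s ⊆ vertexSet K :=
  fun _ hx => mem_vertexSet_iff.2 ⟨s, hs, hx⟩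

lemma mem_link_iff {K : Finset (Finset V)} {v : V} {β : Finset V} :
    β ∈ link K {v} ↔ β ∈ K ∧ v ∉ β ∧ insert v β ∈ K := by
  simp [link, Finset.disjoint_singleton_left, ← Finset.insert_eq]

/-- The result of starring vertex `w` in the facet `σ`. -/
def starY (X : Finset (Finset V)) (σ : Finset V) (w : V) : Finset (Finset V) :=
  X.erase σ ∪ (σ.powerset.filter fun τ => τ ≠ σ).image fun τ => insert w τ

lemma mem_starY {X : Finset (Finset V)} {σ : Finset V} {w : V} {s : Finset V} :
    s ∈ starY X σ w ↔ (s ∈ X ∧ s ≠ σ) ∨ ∃ τ, τ ⊆ σ ∧ τ ≠ σ ∧ s = insert w τ := by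
  constructor
  · intro h
    rcases Finset.mem_union.1 h with h | h
    · exact Or.inl ⟨(Finset.mem_erase.1 h).2, (Finset.mem_erase.1 h).1⟩
    · obtain ⟨τ, hτ, rfl⟩ := Finset.mem_image.1 h
      rw [Finset.mem_filter, Finset.mem_powerset] at hτ
      exact Or.inr ⟨τ, hτ.1, hτ.2, rfl⟩
  · rintro (⟨h1, h2⟩ | ⟨τ, h1, h2, rfl⟩)
    · exact Finset.mem_union_left _ (Finset.mem_erase.2 ⟨h2, h1⟩)
    · exact Finset.mem_union_right _ (Finset.mem_image.2
        ⟨τ, Finset.mem_filter.2 ⟨Finset.mem_powerset.2 h1, h2⟩, rfl⟩)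

lemma std_isComplex {S : Finset (Finset V)} {d : ℕ} (h : IsStandardSphere S d) :
    IsComplex S := by
  obtain ⟨A, hA, rfl⟩ := h
  constructor
  · intro s hs
    exact (Finset.mem_filter.1 hs).2.1
  · intro s hs t hts ht
    rw [Finset.mem_filter, Finset.mem_powerset] at hs ⊢
    refine ⟨hts.trans hs.1, ht, ?_⟩
    rintro rfl
    exact hs.2.2 (subset_antisymm hs.1 hts)

lemma std_facet_card {S : Finset (Finset V)} {d : ℕ} (h : IsStandardSphere S d) :
    ∀ s, IsFacet S s → s.card = d + 1 := by
  obtain ⟨A, hA, rfl⟩ := h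
  rintro s ⟨hs, hmax⟩
  rw [Finset.mem_filter, Finset.mem_powerset] at hs
  obtain ⟨hsA, hne, hsA'⟩ := hs
  have hlt : s.card < A.card := Finset.card_lt_card (hsA.ssubset_of_ne hsA')
  by_contra hcard
  obtain ⟨a, haA, has⟩ := Finset.exists_of_ssubset (hsA.ssubset_of_ne hsA')
  have hmem : insert a s ∈ A.powerset.filter fun s => s.Nonempty ∧ s ≠ A := by
    rw [Finset.mem_filter, Finset.mem_powerset]
    refine ⟨Finset.insert_subset haA hsA, Finset.insert_nonempty _ _, ?_⟩
    intro h
    have := congrArg Finset.card h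
    rw [Finset.card_insert_of_notMem has, hA] at this
    omega
  have := hmax _ hmem (Finset.subset_insert a s)
  exact has (this ▸ Finset.mem_insert_self a s)

lemma std_link {S : Finset (Finset V)} {d : ℕ} (hd : 1 ≤ d) (h : IsStandardSphere S d)
    {v : V} (hv : v ∈ vertexSet S) : IsStandardSphere (link S {v}) (d - 1) := by
  obtain ⟨A, hA, rfl⟩ := h
  have hvA : v ∈ A := by
    obtain ⟨s, hs, hvs⟩ := mem_vertexSet_iff.1 hv
    rw [Finset.mem_filter, Finset.mem_powerset] at hs
    exact hs.1 hvs
  refine ⟨A.erase v, ?_, ?_⟩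
  · rw [Finset.card_erase_of_mem hvA, hA]
    omega
  · ext β
    rw [mem_link_iff]
    simp only [Finset.mem_filter, Finset.mem_powerset]
    constructor
    · rintro ⟨⟨hβA, hβne, hβA'⟩, hvβ, hiA, hine, hiA'⟩
      refine ⟨fun x hx => Finset.mem_erase.2 ⟨fun h => hvβ (h ▸ hx), hβA hx⟩, hβne, ?_⟩
      rintro rfl
      exact hiA' (by rw [Finset.insert_erase hvA])
    · rintro ⟨hβ, hβne, hβne'⟩
      have hβA : β ⊆ A := hβ.trans (Finset.erase_subset _ _)
      have hvβ : v ∉ β := fun h => (Finset.mem_erase.1 (hβ h)).1 rfl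
      refine ⟨⟨hβA, hβne, ?_⟩, hvβ, Finset.insert_subset hvA hβA,
        Finset.insert_nonempty _ _, ?_⟩
      · rintro rfl
        exact hvβ hvA
      · intro hins
        exact hβne' (by rw [← hins, Finset.erase_insert hvβ])

lemma starY_isComplex {X : Finset (Finset V)} {σ : Finset V} {w : V}
    (hX : IsComplex X) (hσ : IsFacet X σ) (hw : w ∉ vertexSet X) :
    IsComplex (starY X σ w) := by
  constructor
  · intro s hs
    rcases mem_starY.1 hs with ⟨h1, _⟩ | ⟨τ, _, _, rfl⟩
    · exact hX.1 s h1
    · exact Finset.insert_nonempty _ _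
  · intro s hs t hts ht
    rcases mem_starY.1 hs with ⟨h1, h2⟩ | ⟨τ, h1, h2, rfl⟩
    · refine mem_starY.2 (Or.inl ⟨hX.2 s h1 t hts ht, ?_⟩)
      rintro rfl
      exact h2 (hσ.2 s h1 hts).symm
    · have hterase : t.erase w ⊆ τ := by
        intro x hx
        have hx' := hts (Finset.mem_of_mem_erase hx)
        rcases Finset.mem_insert.1 hx' with h | h
        · exact absurd h (Finset.ne_of_mem_erase hx)
        · exact h
      by_cases hwt : w ∈ t
      · refine mem_starY.2 (Or.inr ⟨t.erase w, hterase.trans h1, ?_,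
          (Finset.insert_erase hwt).symm⟩)
        intro hEq
        exact h2 (subset_antisymm h1 (hEq ▸ hterase))
      · have htτ : t ⊆ τ := by
          intro x hx
          rcases Finset.mem_insert.1 (hts hx) with h | h
          · exact absurd (h ▸ hx) hwt
          · exact h
        have htX : t ∈ X := hX.2 σ hσ.1 t (htτ.trans h1) ht
        refine mem_starY.2 (Or.inl ⟨htX, ?_⟩)
        rintro rfl
        exact h2 (subset_antisymm h1 htτ)

lemma starY_facet_card {X : Finset (Finset V)} {σ : Finset V} {w : V} {d : ℕ}
    (hX : IsComplex X) (hfac : ∀ s, IsFacet X s → s.card = d + 1)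
    (hσ : IsFacet X σ) (hw : w ∉ vertexSet X) :
    ∀ s, IsFacet (starY X σ w) s → s.card = d + 1 := by
  have hσcard := hfac σ hσ
  have hwσ : w ∉ σ := fun h => hw (subset_vertexSet hσ.1 h)
  rintro s ⟨hs, hmax⟩
  rcases mem_starY.1 hs with ⟨h1, h2⟩ | ⟨τ, h1, h2, rfl⟩
  · have hws : w ∉ s := fun h => hw (subset_vertexSet h1 h)
    by_cases hsσ : s ⊆ σ
    · exfalso
      obtain ⟨x, hxσ, hxs⟩ := Finset.exists_of_ssubset (hsσ.ssubset_of_ne h2)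
      have hsub : s ⊆ σ.erase x :=
        fun y hy => Finset.mem_erase.2 ⟨fun h => hxs (h ▸ hy), hsσ hy⟩
      have hmem : insert w (σ.erase x) ∈ starY X σ w :=
        mem_starY.2 (Or.inr ⟨σ.erase x, Finset.erase_subset _ _,
          fun h => (Finset.erase_eq_self.1 h) hxσ, rfl⟩)
      have := hmax _ hmem (hsub.trans (Finset.subset_insert _ _))
      exact hws (this ▸ Finset.mem_insert_self w _)
    · apply hfac s
      refine ⟨h1, fun t htX hst => ?_⟩
      by_cases htσ : t = σ
      · exact absurd (htσ ▸ hst) hsσ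
      · exact hmax t (mem_starY.2 (Or.inl ⟨htX, htσ⟩)) hst
  · have hwτ : w ∉ τ := fun h => hwσ (h1 h)
    have hτlt : τ.card < σ.card := Finset.card_lt_card (h1.ssubset_of_ne h2)
    obtain ⟨C, hτC, hCσ, hC⟩ := Finset.exists_subsuperset_card_eq (n := d) h1
      (by omega) (by omega)
    have hCd : C.card = d := by omega
    have hCσ' : C ≠ σ := by
      intro h
      rw [h, hσcard] at hCd
      omega
    have hmem : insert w C ∈ starY X σ w := mem_starY.2 (Or.inr ⟨C, hCσ, hCσ', rfl⟩)
    have heq := hmax _ hmem (Finset.insert_subset_insert w hτC)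
    have hwC : w ∉ C := fun h => hwσ (hCσ h)
    have hτC' : τ = C := by
      rw [← Finset.erase_insert hwτ, heq, Finset.erase_insert hwC]
    rw [Finset.card_insert_of_notMem hwτ, hτC', hCd]

lemma starY_vertex {X : Finset (Finset V)} {σ : Finset V} {w : V} (hσ : σ ∈ X) {u : V}
    (hu : u ∈ vertexSet (starY X σ w)) : u = w ∨ u ∈ vertexSet X := by
  obtain ⟨s, hs, hus⟩ := mem_vertexSet_iff.1 hu
  rcases mem_starY.1 hs with ⟨h1, _⟩ | ⟨τ, h1, _, rfl⟩
  · exact Or.inr (mem_vertexSet_iff.2 ⟨s, h1, hus⟩)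
  · rcases Finset.mem_insert.1 hus with h | h
    · exact Or.inl h
    · exact Or.inr (mem_vertexSet_iff.2 ⟨σ, hσ, h1 h⟩)

lemma link_starY_apex {X : Finset (Finset V)} {σ : Finset V} {w : V} {e : ℕ}
    (hX : IsComplex X) (hσ : IsFacet X σ) (hw : w ∉ vertexSet X)
    (hσd : σ.card = e + 2) :
    IsStandardSphere (link (starY X σ w) {w}) e := by
  have hwσ : w ∉ σ := fun h => hw (subset_vertexSet hσ.1 h)
  refine ⟨σ, hσd, ?_⟩
  ext β
  rw [mem_link_iff, Finset.mem_filter, Finset.mem_powerset]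
  constructor
  · rintro ⟨hβ, hwβ, hins⟩
    have hβX : β ∈ X ∧ β ≠ σ := by
      rcases mem_starY.1 hβ with h | ⟨τ, _, _, rfl⟩
      · exact h
      · exact absurd (Finset.mem_insert_self w τ) hwβ
    rcases mem_starY.1 hins with ⟨h3, _⟩ | ⟨τ, h3, h4, h5⟩
    · exact absurd (subset_vertexSet h3 (Finset.mem_insert_self w β)) hw
    · have hwτ : w ∉ τ := fun h => hwσ (h3 h)
      have hβτ : β = τ := by
        rw [← Finset.erase_insert hwβ, h5, Finset.erase_insert hwτ]
      exact ⟨hβτ ▸ h3, hX.1 β hβX.1, hβτ ▸ h4⟩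
  · rintro ⟨hβσ, hβne, hβσ'⟩
    have hβX : β ∈ X := hX.2 σ hσ.1 β hβσ hβne
    have hwβ : w ∉ β := fun h => hwσ (hβσ h)
    exact ⟨mem_starY.2 (Or.inl ⟨hβX, hβσ'⟩), hwβ,
      mem_starY.2 (Or.inr ⟨β, hβσ, hβσ', rfl⟩)⟩

lemma link_starY_notin {X : Finset (Finset V)} {σ : Finset V} {w v : V}
    (hσ : IsFacet X σ) (hw : w ∉ vertexSet X) (hvσ : v ∉ σ) (hvw : v ≠ w) :
    link (starY X σ w) {v} = link X {v} := by
  ext β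
  rw [mem_link_iff, mem_link_iff]
  constructor
  · rintro ⟨hβ, hvβ, hins⟩
    have hβX : β ∈ X ∧ β ≠ σ := by
      rcases mem_starY.1 hβ with h | ⟨τ, h1, h2, rfl⟩
      · exact h
      · exfalso
        rcases mem_starY.1 hins with ⟨h3, _⟩ | ⟨ρ, h3, h4, h5⟩
        · exact hw (subset_vertexSet h3
            (Finset.mem_insert_of_mem (Finset.mem_insert_self w τ)))
        · have hv' : v ∈ insert w ρ := h5 ▸ Finset.mem_insert_self v _
          rcases Finset.mem_insert.1 hv' with h | h
          · exact hvw h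
          · exact hvσ (h3 h)
    refine ⟨hβX.1, hvβ, ?_⟩
    rcases mem_starY.1 hins with ⟨h3, _⟩ | ⟨ρ, h3, h4, h5⟩
    · exact h3
    · exfalso
      have hwmem : w ∈ insert v β := h5 ▸ Finset.mem_insert_self w ρ
      rcases Finset.mem_insert.1 hwmem with h | h
      · exact hvw h.symm
      · exact hw (subset_vertexSet hβX.1 h)
  · rintro ⟨hβ, hvβ, hins⟩
    have hβσ : β ≠ σ := by
      rintro rfl
      have := hσ.2 _ hins (Finset.subset_insert v β)
      exact hvσ (by rw [this]; exact Finset.mem_insert_self v β)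
    refine ⟨mem_starY.2 (Or.inl ⟨hβ, hβσ⟩), hvβ, mem_starY.2 (Or.inl ⟨hins, ?_⟩)⟩
    intro h
    exact hvσ (h ▸ Finset.mem_insert_self v β)

lemma link_starY_in {X : Finset (Finset V)} {σ : Finset V} {w v : V}
    (hX : IsComplex X) (hσ : IsFacet X σ) (hw : w ∉ vertexSet X) (hvσ : v ∈ σ)
    (hσ2 : 2 ≤ σ.card) :
    StarringOf (link X {v}) (link (starY X σ w) {v}) := by
  have hvX : v ∈ vertexSet X := subset_vertexSet hσ.1 hvσ
  have hvw : v ≠ w := fun h => hw (h ▸ hvX)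
  have hwσ : w ∉ σ := fun h => hw (subset_vertexSet hσ.1 h)
  have hσv_mem : σ.erase v ∈ link X {v} := by
    rw [mem_link_iff]
    refine ⟨hX.2 σ hσ.1 _ (Finset.erase_subset _ _) ?_, Finset.notMem_erase _ _, ?_⟩
    · rw [← Finset.card_pos, Finset.card_erase_of_mem hvσ]
      omega
    · rw [Finset.insert_erase hvσ]
      exact hσ.1
  refine ⟨σ.erase v, w, ⟨hσv_mem, ?_⟩, ?_, ?_⟩
  · intro t ht hsub
    rw [mem_link_iff] at ht
    obtain ⟨htX, hvt, hins⟩ := ht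
    have h1 : σ ⊆ insert v t := by
      intro x hx
      by_cases hxv : x = v
      · exact hxv ▸ Finset.mem_insert_self v t
      · exact Finset.mem_insert_of_mem (hsub (Finset.mem_erase.2 ⟨hxv, hx⟩))
    have h2 : σ = insert v t := hσ.2 _ hins h1
    refine subset_antisymm hsub (fun x hx => Finset.mem_erase.2
      ⟨fun h => hvt (h ▸ hx), ?_⟩)
    rw [h2]
    exact Finset.mem_insert_of_mem hx
  · intro hmem
    obtain ⟨s, hs, hws⟩ := mem_vertexSet_iff.1 hmem
    exact hw (subset_vertexSet (Finset.mem_of_mem_filter s hs) hws)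
  · ext β
    rw [mem_link_iff]
    constructor
    · rintro ⟨hβ, hvβ, hins⟩
      rcases mem_starY.1 hβ with ⟨h1, h2⟩ | ⟨τ, h1, h2, rfl⟩
      · have hwβ : w ∉ β := fun h => hw (subset_vertexSet h1 h)
        have hinsX : insert v β ∈ X := by
          rcases mem_starY.1 hins with ⟨h3, _⟩ | ⟨ρ, h3, h4, h5⟩
          · exact h3
          · exfalso
            have hwmem : w ∈ insert v β := h5 ▸ Finset.mem_insert_self w ρ
            rcases Finset.mem_insert.1 hwmem with h | h
            · exact hvw h.symm
            · exact hwβ h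
        apply Finset.mem_union_left
        refine Finset.mem_erase.2 ⟨?_, mem_link_iff.2 ⟨h1, hvβ, hinsX⟩⟩
        intro hEq
        have hβσ : insert v β = σ := by rw [hEq, Finset.insert_erase hvσ]
        rcases mem_starY.1 hins with ⟨_, h4⟩ | ⟨ρ, h3, h4, h5⟩
        · exact h4 hβσ
        · have hwmem : w ∈ insert v β := h5 ▸ Finset.mem_insert_self w ρ
          rw [hβσ] at hwmem
          exact hwσ hwmem
      · have hvτ : v ∉ τ := fun h => hvβ (Finset.mem_insert_of_mem h)
        have hτ' : τ ⊆ σ.erase v :=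
          fun x hx => Finset.mem_erase.2 ⟨fun h => hvτ (h ▸ hx), h1 hx⟩
        apply Finset.mem_union_right
        refine Finset.mem_image.2 ⟨τ, Finset.mem_filter.2
          ⟨Finset.mem_powerset.2 hτ', ?_⟩, rfl⟩
        intro hEq
        rcases mem_starY.1 hins with ⟨h3, _⟩ | ⟨ρ, h3, h4, h5⟩
        · exact hw (subset_vertexSet h3
            (Finset.mem_insert_of_mem (Finset.mem_insert_self w τ)))
        · apply h4
          have hwv : w ∉ insert v τ := by
            intro h
            rcases Finset.mem_insert.1 h with h | h
            · exact hvw h.symm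
            · exact hwσ (h1 h)
          have hwρ : w ∉ ρ := fun h => hwσ (h3 h)
          have hρ : ρ = insert v τ := by
            have e1 : insert w (insert v τ) = insert w ρ := by
              rw [← h5, Finset.insert_comm]
            calc ρ = (insert w ρ).erase w := (Finset.erase_insert hwρ).symm
              _ = (insert w (insert v τ)).erase w := by rw [e1]
              _ = insert v τ := Finset.erase_insert hwv
          rw [hρ, hEq, Finset.insert_erase hvσ]
    · intro hβ
      rcases Finset.mem_union.1 hβ with h | h
      · obtain ⟨hne, hmem⟩ := Finset.mem_erase.1 h
        rw [mem_link_iff] at hmem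
        obtain ⟨hβX, hvβ, hinsX⟩ := hmem
        have hβσ : β ≠ σ := fun h => hvβ (by rw [h]; exact hvσ)
        have hinsσ : insert v β ≠ σ := by
          intro h
          apply hne
          rw [← h, Finset.erase_insert hvβ]
        exact ⟨mem_starY.2 (Or.inl ⟨hβX, hβσ⟩), hvβ,
          mem_starY.2 (Or.inl ⟨hinsX, hinsσ⟩)⟩
      · obtain ⟨τ, hτmem, rfl⟩ := Finset.mem_image.1 h
        rw [Finset.mem_filter, Finset.mem_powerset] at hτmem
        obtain ⟨hτsub, hτne⟩ := hτmem
        have hvτ : v ∉ τ := fun h => (Finset.mem_erase.1 (hτsub h)).1 rfl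
        have hτσ : τ ⊆ σ := hτsub.trans (Finset.erase_subset _ _)
        have hτσ' : τ ≠ σ := fun h => hvτ (by rw [h]; exact hvσ)
        have hwτ : w ∉ τ := fun h => hwσ (hτσ h)
        refine ⟨mem_starY.2 (Or.inr ⟨τ, hτσ, hτσ', rfl⟩), ?_, ?_⟩
        · intro h
          rcases Finset.mem_insert.1 h with h | h
          · exact hvw h
          · exact hvτ h
        · apply mem_starY.2
          refine Or.inr ⟨insert v τ, Finset.insert_subset hvσ hτσ, ?_,
            Finset.insert_comm v w τ⟩
          intro h
          apply hτne
          rw [← h, Finset.erase_insert hvτ]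

end Stmt10Aux

/-- The link of any vertex in a stacked `d`-sphere (`d ≥ 2`) is a stacked `(d-1)`-sphere. -/
theorem stmt10 {V : Type} [DecidableEq V] (d : ℕ) (hd : 2 ≤ d)
    (X : Finset (Finset V)) (hX : IsStackedSphere X d)
    (v : V) (hv : v ∈ vertexSet X) :
    IsStackedSphere (link X {v}) (d - 1) := by
  obtain ⟨S, hS, hrel⟩ := hX
  suffices h : ∀ Y : Finset (Finset V), Relation.ReflTransGen StarringOf S Y →
      (IsComplex Y ∧ ∀ s, IsFacet Y s → s.card = d + 1) ∧
      ∀ u ∈ vertexSet Y, IsStackedSphere (link Y {u}) (d - 1) by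
    exact (h X hrel).2 v hv
  intro Y hrelY
  induction hrelY with
  | refl =>
    refine ⟨⟨Stmt10Aux.std_isComplex hS, Stmt10Aux.std_facet_card hS⟩, fun u hu => ?_⟩
    exact ⟨_, Stmt10Aux.std_link (by omega) hS hu, Relation.ReflTransGen.refl⟩
  | @tail b c hab hbc ih =>
    obtain ⟨⟨hbC, hbF⟩, hbL⟩ := ih
    obtain ⟨σ, w, hσ, hw, hc⟩ := hbc
    have hc' : c = Stmt10Aux.starY b σ w := hc
    subst hc'
    have hσcard : σ.card = d + 1 := hbF σ hσ
    refine ⟨⟨Stmt10Aux.starY_isComplex hbC hσ hw,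
      Stmt10Aux.starY_facet_card hbC hbF hσ hw⟩, ?_⟩
    intro u hu
    rcases Stmt10Aux.starY_vertex hσ.1 hu with rfl | huX
    · exact ⟨_, Stmt10Aux.link_starY_apex hbC hσ hw (by omega),
        Relation.ReflTransGen.refl⟩
    · by_cases huσ : u ∈ σ
      · obtain ⟨S', hS', hrel'⟩ := hbL u huX
        exact ⟨S', hS', hrel'.tail
          (Stmt10Aux.link_starY_in hbC hσ hw huσ (by omega))⟩
      · have huw : u ≠ w := fun h => hw (h ▸ huX)
        rw [Stmt10Aux.link_starY_notin hσ hw huσ huw]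
        exact hbL u huX
  
end
end

section
/- For every $n \geq 2$, $P_0(n) \geq \frac{1}{2} P(n-1)$ and $P_1(n) \geq \frac{1}{2} P(n-1)$. -/
open Finset

noncomputable section

attribute [local instance] Classical.propDecidable

variable {V : Type} [DecidableEq V]

/-- The sup (max) of a nonempty multiset of naturals is a member. -/
lemma aux_sup_mem {s : Multiset ℕ} (h : s ≠ 0) : s.sup ∈ s := by
  induction s using Multiset.induction with
  | empty => exact absurd rfl h
  | cons a s ih =>
    rcases eq_or_ne s 0 with rfl | hs
    · simp
    · rw [Multiset.sup_cons]
      rcases le_total a s.sup with h1 | h1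
      · rw [sup_eq_right.mpr h1]; exact Multiset.mem_cons_of_mem (ih hs)
      · rw [sup_eq_left.mpr h1]; exact Multiset.mem_cons_self _ _

/-- Adding a part `1` to a partition of `m` gives a partition of `m + 1`. -/
def addOnePart {m : ℕ} (q : Nat.Partition m) : Nat.Partition (m + 1) where
  parts := 1 ::ₘ q.parts
  parts_pos := by
    intro i hi
    rcases Multiset.mem_cons.mp hi with rfl | hi
    · norm_num
    · exact q.parts_pos hi
  parts_sum := by rw [Multiset.sum_cons, q.parts_sum, add_comm]

lemma addOnePart_injective (m : ℕ) : Function.Injective (@addOnePart m) := by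
  intro q q' h
  have h2 : (addOnePart q).parts = (addOnePart q').parts := congrArg _ h
  have : q.parts = q'.parts := by
    simpa [addOnePart] using h2
  cases q; cases q'; simpa using this

lemma addOnePart_filter {m : ℕ} (q : Nat.Partition m) :
    ((addOnePart q).parts.filter fun i => Even i) = q.parts.filter fun i => Even i := by
  simp only [addOnePart]
  rw [Multiset.filter_cons_of_neg]
  simp

lemma parts_ne_zero {m : ℕ} (q : Nat.Partition (m + 1)) : q.parts ≠ 0 := by
  intro h
  have := q.parts_sum
  rw [h] at this
  simp at this

lemma sup_mem_parts {m : ℕ} (q : Nat.Partition (m + 1)) : q.parts.sup ∈ q.parts :=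
  aux_sup_mem (parts_ne_zero q)

/-- Incrementing the largest part of a partition of `m + 1` gives a partition of `m + 2`. -/
def incMax {m : ℕ} (q : Nat.Partition (m + 1)) : Nat.Partition (m + 2) where
  parts := (q.parts.sup + 1) ::ₘ q.parts.erase q.parts.sup
  parts_pos := by
    intro i hi
    rcases Multiset.mem_cons.mp hi with rfl | hi
    · omega
    · exact q.parts_pos (Multiset.mem_of_mem_erase hi)
  parts_sum := by
    have h1 : q.parts.sup ::ₘ q.parts.erase q.parts.sup = q.parts :=
      Multiset.cons_erase (sup_mem_parts q)
    have h2 : q.parts.sup + (q.parts.erase q.parts.sup).sum = m + 1 := by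
      rw [← Multiset.sum_cons, h1, q.parts_sum]
    rw [Multiset.sum_cons]
    omega

lemma incMax_parts_sup {m : ℕ} (q : Nat.Partition (m + 1)) :
    (incMax q).parts.sup = q.parts.sup + 1 := by
  have herase : (q.parts.erase q.parts.sup).sup ≤ q.parts.sup :=
    Multiset.sup_le.mpr fun b hb => Multiset.le_sup (Multiset.mem_of_mem_erase hb)
  simp only [incMax, Multiset.sup_cons]
  exact sup_eq_left.mpr (le_trans herase (Nat.le_succ _))

lemma incMax_injective (m : ℕ) : Function.Injective (@incMax m) := by
  intro q q' h
  have h2 : (incMax q).parts = (incMax q').parts := congrArg _ h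
  have hsup : q.parts.sup = q'.parts.sup := by
    have := congrArg Multiset.sup h2
    rw [incMax_parts_sup, incMax_parts_sup] at this
    omega
  have h3 : q.parts.erase q.parts.sup = q'.parts.erase q'.parts.sup := by
    have h2' : (q.parts.sup + 1) ::ₘ q.parts.erase q.parts.sup
        = (q.parts.sup + 1) ::ₘ q'.parts.erase q'.parts.sup := by
      simpa [incMax, hsup] using h2
    exact (Multiset.cons_inj_right _).mp h2'
  have hparts : q.parts = q'.parts := by
    rw [← Multiset.cons_erase (sup_mem_parts q), h3, hsup]
    exact Multiset.cons_erase (sup_mem_parts q')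
  cases q; cases q'; simpa using hparts

lemma incMax_filter_parity {m : ℕ} (q : Nat.Partition (m + 1)) :
    Even (Multiset.card ((incMax q).parts.filter fun i => Even i)) ↔
      Odd (Multiset.card (q.parts.filter fun i => Even i)) := by
  have h1 : q.parts.sup ::ₘ q.parts.erase q.parts.sup = q.parts :=
    Multiset.cons_erase (sup_mem_parts q)
  set e := q.parts.erase q.parts.sup with he
  set a := q.parts.sup with ha
  have hq : Multiset.card (q.parts.filter fun i => Even i)
      = Multiset.card (e.filter fun i => Even i) + (if Even a then 1 else 0) := by
    rw [← h1, Multiset.filter_cons]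
    by_cases hev : Even a <;> simp [hev, add_comm]
  have hq' : Multiset.card ((incMax q).parts.filter fun i => Even i)
      = Multiset.card (e.filter fun i => Even i) + (if Even (a + 1) then 1 else 0) := by
    show Multiset.card (((a + 1) ::ₘ e).filter fun i => Even i) = _
    rw [Multiset.filter_cons]
    by_cases hev : Even (a + 1) <;> simp [hev, add_comm]
  rw [hq, hq']
  by_cases hev : Even a <;>
    simp [hev, Nat.even_add_one, Nat.odd_iff, Nat.even_iff] at * <;>
    try omega

lemma numPartitions_split (k : ℕ) :
    numPartitions k = numEvenPartitions k + numOddPartitions k := by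
  classical
  have h := Fintype.card_congr
    (Equiv.sumCompl fun p : Nat.Partition k =>
      Even (Multiset.card (p.parts.filter fun i => Even i)))
  rw [Fintype.card_sum] at h
  have h2 : Fintype.card {p : Nat.Partition k //
      ¬ Even (Multiset.card (p.parts.filter fun i => Even i))} = numOddPartitions k := by
    refine Fintype.card_congr (Equiv.subtypeEquivRight fun p => ?_)
    exact Nat.not_even_iff_odd
  rw [h2] at h
  unfold numPartitions numEvenPartitions
  rw [← h]

lemma even_le_even (m : ℕ) : numEvenPartitions m ≤ numEvenPartitions (m + 1) := by
  classical
  refine Fintype.card_le_of_injective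
    (fun p => ⟨addOnePart p.1, by rw [addOnePart_filter]; exact p.2⟩) ?_
  intro p p' h
  exact Subtype.ext (addOnePart_injective m (congrArg Subtype.val h))

lemma odd_le_odd (m : ℕ) : numOddPartitions m ≤ numOddPartitions (m + 1) := by
  classical
  refine Fintype.card_le_of_injective
    (fun p => ⟨addOnePart p.1, by rw [addOnePart_filter]; exact p.2⟩) ?_
  intro p p' h
  exact Subtype.ext (addOnePart_injective m (congrArg Subtype.val h))

lemma odd_le_even (m : ℕ) : numOddPartitions (m + 1) ≤ numEvenPartitions (m + 2) := by
  classical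
  refine Fintype.card_le_of_injective
    (fun p => ⟨incMax p.1, (incMax_filter_parity p.1).mpr p.2⟩) ?_
  intro p p' h
  exact Subtype.ext (incMax_injective m (congrArg Subtype.val h))

lemma even_le_odd (m : ℕ) : numEvenPartitions (m + 1) ≤ numOddPartitions (m + 2) := by
  classical
  refine Fintype.card_le_of_injective
    (fun p => ⟨incMax p.1, by
      rw [← Nat.not_even_iff_odd]
      intro hc
      exact (Nat.not_odd_iff_even.mpr p.2) ((incMax_filter_parity p.1).mp hc)⟩) ?_
  intro p p' h
  exact Subtype.ext (incMax_injective m (congrArg Subtype.val h))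

/-- For every `n ≥ 2`, `P₀(n) ≥ P(n-1)/2` and `P₁(n) ≥ P(n-1)/2`. -/
theorem stmt17 (n : ℕ) (hn : 2 ≤ n) :
    numPartitions (n - 1) ≤ 2 * numEvenPartitions n ∧
    numPartitions (n - 1) ≤ 2 * numOddPartitions n := by
  obtain ⟨m, rfl⟩ : ∃ m, n = m + 2 := ⟨n - 2, by omega⟩
  have h1 : m + 2 - 1 = m + 1 := rfl
  rw [h1, numPartitions_split (m + 1)]
  constructor
  · calc numEvenPartitions (m + 1) + numOddPartitions (m + 1)
        ≤ numEvenPartitions (m + 2) + numEvenPartitions (m + 2) :=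
          add_le_add (even_le_even (m + 1)) (odd_le_even m)
      _ = 2 * numEvenPartitions (m + 2) := (two_mul _).symm
  · calc numEvenPartitions (m + 1) + numOddPartitions (m + 1)
        ≤ numOddPartitions (m + 2) + numOddPartitions (m + 2) :=
          add_le_add (even_le_odd m) (odd_le_odd (m + 1))
      _ = 2 * numOddPartitions (m + 2) := (two_mul _).symm

end
end

section
/- For $d \geq 2$ and $m \geq 1$, the boundary complex $\partial N^{d+1}_{m+d+1}$ is a stacked $d$-sphere, and $A_m = \{1, \ldots, d+1\}$ and $B_m = \{m+1, \ldots, m+d+1\}$ are two of its facets. -/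
open Finset

noncomputable section

attribute [local instance] Classical.propDecidable

variable {V : Type} [DecidableEq V]

/-! ### Auxiliary lemmas for `stmt18` -/

lemma mem_bN {d m : ℕ} {s : Finset ℕ} :
    s ∈ boundaryN d m ↔ s.Nonempty ∧ ∃ F ∈ boundaryNFacets d m, s ⊆ F := by
  simp only [boundaryN, mem_filter, mem_biUnion, mem_powerset, and_comm]

lemma mem_bNF {d m : ℕ} {F : Finset ℕ} :
    F ∈ boundaryNFacets d m ↔ F ⊆ Finset.Icc 1 (m + d + 1) ∧ F.card = d + 1 ∧
      ((Finset.Icc 1 m).filter fun k => F ⊆ Finset.Icc k (k + d + 1)).card = 1 := by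
  simp only [boundaryNFacets, mem_filter, mem_powerset, and_assoc]

lemma card_le_of_mem_bN {d m : ℕ} {s : Finset ℕ} (h : s ∈ boundaryN d m) : s.card ≤ d + 1 := by
  obtain ⟨-, F, hF, hsF⟩ := mem_bN.1 h
  exact le_trans (card_le_card hsF) (mem_bNF.1 hF).2.1.le

lemma isFacet_of_mem_bNF {d m : ℕ} {F : Finset ℕ} (h : F ∈ boundaryNFacets d m) :
    IsFacet (boundaryN d m) F := by
  have hcard := (mem_bNF.1 h).2.1
  refine ⟨mem_bN.2 ⟨card_pos.1 (by omega), F, h, subset_rfl⟩, fun t ht hFt => ?_⟩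
  exact eq_of_subset_of_card_le hFt (by have := card_le_of_mem_bN ht; omega)

lemma A_mem_bNF {d m : ℕ} (hm : 1 ≤ m) : Finset.Icc 1 (d + 1) ∈ boundaryNFacets d m := by
  rw [mem_bNF]
  refine ⟨Icc_subset_Icc le_rfl (by omega), by rw [Nat.card_Icc]; omega, ?_⟩
  have h : ((Finset.Icc 1 m).filter fun k => Finset.Icc 1 (d+1) ⊆ Finset.Icc k (k + d + 1))
      = {1} := by
    ext k
    simp only [mem_filter, mem_Icc, mem_singleton,
      Finset.Icc_subset_Icc_iff (by omega : (1:ℕ) ≤ d + 1)]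
    omega
  rw [h, card_singleton]

lemma B_mem_bNF {d m : ℕ} (hm : 1 ≤ m) :
    Finset.Icc (m + 1) (m + d + 1) ∈ boundaryNFacets d m := by
  rw [mem_bNF]
  refine ⟨Icc_subset_Icc (by omega) le_rfl, by rw [Nat.card_Icc]; omega, ?_⟩
  have h : ((Finset.Icc 1 m).filter fun k =>
      Finset.Icc (m+1) (m+d+1) ⊆ Finset.Icc k (k + d + 1)) = {m} := by
    ext k
    simp only [mem_filter, mem_Icc, mem_singleton,
      Finset.Icc_subset_Icc_iff (by omega : m + 1 ≤ m + d + 1)]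
    omega
  rw [h, card_singleton]

lemma W_mem_bNF {d m x : ℕ} (hx : x ∈ Finset.Icc (m + 1) (m + d + 1)) :
    (Finset.Icc (m + 1) (m + d + 2)).erase x ∈ boundaryNFacets d (m + 1) := by
  rw [mem_Icc] at hx
  rw [mem_bNF]
  have hsub : (Finset.Icc (m + 1) (m + d + 2)).erase x ⊆ Finset.Icc (m + 1) (m + d + 2) :=
    erase_subset _ _
  refine ⟨hsub.trans (Icc_subset_Icc (by omega) (by omega)), ?_, ?_⟩
  · rw [card_erase_of_mem (by rw [mem_Icc]; omega), Nat.card_Icc]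
    omega
  · have hv : m + d + 2 ∈ (Finset.Icc (m + 1) (m + d + 2)).erase x := by
      rw [mem_erase, mem_Icc]; omega
    have h : ((Finset.Icc 1 (m+1)).filter fun k =>
        (Finset.Icc (m + 1) (m + d + 2)).erase x ⊆ Finset.Icc k (k + d + 1)) = {m+1} := by
      ext k
      simp only [mem_filter, mem_Icc, mem_singleton]
      constructor
      · rintro ⟨hk, hsub'⟩
        have := mem_Icc.1 (hsub' hv)
        omega
      · rintro rfl
        exact ⟨⟨by omega, le_rfl⟩, hsub.trans (by apply Icc_subset_Icc <;> omega)⟩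
    rw [h, card_singleton]

lemma Icc_one_succ (m : ℕ) : Finset.Icc 1 (m+1) = insert (m+1) (Finset.Icc 1 m) := by
  ext k
  simp only [mem_Icc, mem_insert]
  omega

lemma sigma_not_bNF {d m : ℕ} (hm : 1 ≤ m) :
    Finset.Icc (m+1) (m+d+1) ∉ boundaryNFacets d (m+1) := by
  intro h
  have h3 := (mem_bNF.1 h).2.2
  have hsub : ({m, m+1} : Finset ℕ) ⊆ (Finset.Icc 1 (m+1)).filter fun k =>
      Finset.Icc (m+1) (m+d+1) ⊆ Finset.Icc k (k+d+1) := by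
    intro k hk
    rw [mem_insert, mem_singleton] at hk
    rcases hk with rfl | rfl <;>
      simp only [mem_filter, mem_Icc] <;>
      exact ⟨⟨by omega, by omega⟩, Icc_subset_Icc (by omega) (by omega)⟩
  have := card_le_card hsub
  rw [card_pair (by omega : m ≠ m+1)] at this
  omega

lemma facet_with_v {d m : ℕ} {F : Finset ℕ} (hF : F ∈ boundaryNFacets d (m+1))
    (hv : m+d+2 ∈ F) : F ⊆ Finset.Icc (m+1) (m+d+2) := by
  obtain ⟨h1, h2, h3⟩ := mem_bNF.1 hF
  obtain ⟨k, hk⟩ := card_pos.1 (by omega : 0 < ((Finset.Icc 1 (m+1)).filter fun k =>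
      F ⊆ Finset.Icc k (k + d + 1)).card)
  rw [mem_filter, mem_Icc] at hk
  obtain ⟨⟨hk1, hk2⟩, hksub⟩ := hk
  have hvk := mem_Icc.1 (hksub hv)
  intro x hx
  have := mem_Icc.1 (hksub hx)
  rw [mem_Icc]
  omega

lemma demote_bNF {d m : ℕ} {F : Finset ℕ} (hm : 1 ≤ m) (hF : F ∈ boundaryNFacets d (m+1))
    (hv : m+d+2 ∉ F) : F ∈ boundaryNFacets d m := by
  obtain ⟨h1, h2, h3⟩ := mem_bNF.1 hF
  have hnot : ¬ F ⊆ Finset.Icc (m+1) (m+1+d+1) := by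
    intro hsub
    have hFσ : F = Finset.Icc (m+1) (m+d+1) := by
      refine eq_of_subset_of_card_le (fun x hx => ?_) (by rw [Nat.card_Icc]; omega)
      have hax := mem_Icc.1 (hsub hx)
      have hxne : x ≠ m+d+2 := fun h => hv (h ▸ hx)
      rw [mem_Icc]; omega
    exact sigma_not_bNF hm (hFσ ▸ hF)
  rw [Icc_one_succ, filter_insert, if_neg hnot] at h3
  rw [mem_bNF]
  refine ⟨?_, h2, h3⟩
  obtain ⟨k, hk⟩ := card_pos.1 (by omega : 0 < ((Finset.Icc 1 m).filter fun k =>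
      F ⊆ Finset.Icc k (k + d + 1)).card)
  rw [mem_filter, mem_Icc] at hk
  intro x hx
  have := mem_Icc.1 (hk.2 hx)
  rw [mem_Icc]
  omega

lemma promote_bNF {d m : ℕ} {F : Finset ℕ} (hm : 1 ≤ m) (hF : F ∈ boundaryNFacets d m)
    (hne : F ≠ Finset.Icc (m+1) (m+d+1)) : F ∈ boundaryNFacets d (m+1) := by
  obtain ⟨h1, h2, h3⟩ := mem_bNF.1 hF
  rw [mem_bNF]
  refine ⟨h1.trans (Icc_subset_Icc le_rfl (by omega)), h2, ?_⟩
  rw [Icc_one_succ, filter_insert, if_neg, h3]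
  intro hsub
  apply hne
  refine eq_of_subset_of_card_le (fun x hx => ?_) (by rw [Nat.card_Icc]; omega)
  have ha := mem_Icc.1 (hsub hx)
  have hb := mem_Icc.1 (h1 hx)
  rw [mem_Icc]
  omega

lemma bN_one_standard (d : ℕ) : IsStandardSphere (boundaryN d 1) d := by
  refine ⟨Finset.Icc 1 (d + 2), by rw [Nat.card_Icc]; omega, ?_⟩
  have hIcc : (1:ℕ) + d + 1 = d + 2 := by omega
  ext s
  rw [mem_bN, mem_filter, mem_powerset]
  constructor
  · rintro ⟨hne, F, hF, hsF⟩
    rw [mem_bNF, hIcc] at hF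
    refine ⟨hsF.trans hF.1, hne, ?_⟩
    rintro rfl
    have h1 := card_le_card hsF
    have h2 : F.card = d + 1 := hF.2.1
    have h3 : (Finset.Icc 1 (d+2)).card = d + 2 := by rw [Nat.card_Icc]; omega
    omega
  · rintro ⟨hsub, hne, hne'⟩
    have hlt : s.card < d + 2 := by
      have hss : s ⊂ Finset.Icc 1 (d + 2) := lt_of_le_of_ne hsub hne'
      have := card_lt_card hss
      rwa [Nat.card_Icc] at this
    obtain ⟨F, hsF, hFsub, hFcard⟩ :=
      exists_subsuperset_card_eq hsub (by omega : s.card ≤ d + 1)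
        (by rw [Nat.card_Icc]; omega)
    refine ⟨hne, F, ?_, hsF⟩
    rw [mem_bNF, hIcc]
    refine ⟨hFsub, hFcard, ?_⟩
    have h : ((Finset.Icc 1 1).filter fun k => F ⊆ Finset.Icc k (k + d + 1)) = {1} := by
      rw [Finset.Icc_self, filter_singleton, if_pos]
      rw [hIcc]; exact hFsub
    rw [h, card_singleton]

lemma step_starring (d m : ℕ) (hm : 1 ≤ m) :
    StarringOf (boundaryN d m) (boundaryN d (m + 1)) := by
  refine ⟨Finset.Icc (m+1) (m+d+1), m+d+2, isFacet_of_mem_bNF (B_mem_bNF hm), ?_, ?_⟩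
  · intro hv
    rw [vertexSet, mem_sup] at hv
    obtain ⟨s, hs, hvs⟩ := hv
    obtain ⟨-, F, hF, hsF⟩ := mem_bN.1 hs
    have := mem_Icc.1 ((mem_bNF.1 hF).1 (hsF hvs))
    omega
  · ext s
    simp only [mem_union, mem_erase, mem_image, mem_filter, mem_powerset]
    constructor
    · intro hs
      obtain ⟨hne, F, hF, hsF⟩ := mem_bN.1 hs
      by_cases hv : m+d+2 ∈ s
      · right
        have hFv : F ⊆ Finset.Icc (m+1) (m+d+2) := facet_with_v hF (hsF hv)
        refine ⟨s.erase (m+d+2), ⟨fun x hx => ?_, fun hEq => ?_⟩, insert_erase hv⟩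
        · rw [mem_erase] at hx
          have := mem_Icc.1 (hFv (hsF hx.2))
          rw [mem_Icc]
          omega
        · have hsc : s.card ≤ d + 1 := card_le_of_mem_bN hs
          have hec : (s.erase (m+d+2)).card = s.card - 1 := card_erase_of_mem hv
          have hσc : (Finset.Icc (m+1) (m+d+1)).card = d + 1 := by rw [Nat.card_Icc]; omega
          have hpos : 0 < s.card := card_pos.2 ⟨_, hv⟩
          rw [hEq, hσc] at hec
          omega
      · left
        constructor
        · rintro rfl
          have hFσ : F = Finset.Icc (m+1) (m+d+1) := by
            refine (eq_of_subset_of_card_le hsF ?_).symm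
            rw [Nat.card_Icc, (mem_bNF.1 hF).2.1]
            omega
          exact sigma_not_bNF hm (hFσ ▸ hF)
        · by_cases hvF : m+d+2 ∈ F
          · have hFv := facet_with_v hF hvF
            refine mem_bN.2 ⟨hne, _, B_mem_bNF hm, fun x hx => ?_⟩
            have h1 := mem_Icc.1 (hFv (hsF hx))
            have h2 : x ≠ m+d+2 := fun h => hv (h ▸ hx)
            rw [mem_Icc]
            omega
          · exact mem_bN.2 ⟨hne, F, demote_bNF hm hF hvF, hsF⟩
    · intro hs
      rcases hs with ⟨hne, hs⟩ | ⟨τ, ⟨hτ, hτne⟩, rfl⟩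
      · obtain ⟨hne2, F, hF, hsF⟩ := mem_bN.1 hs
        by_cases hFσ : F = Finset.Icc (m+1) (m+d+1)
        · obtain ⟨x, hxσ, hxs⟩ := exists_of_ssubset
            (lt_of_le_of_ne (hFσ ▸ hsF) hne)
          refine mem_bN.2 ⟨hne2, _, W_mem_bNF hxσ, fun y hy => ?_⟩
          rw [mem_erase]
          have := mem_Icc.1 (hFσ ▸ hsF hy)
          exact ⟨fun h => hxs (h ▸ hy), mem_Icc.2 (by omega)⟩
        · exact mem_bN.2 ⟨hne2, F, promote_bNF hm hF hFσ, hsF⟩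
      · obtain ⟨x, hxσ, hxτ⟩ := exists_of_ssubset (lt_of_le_of_ne hτ hτne)
        refine mem_bN.2 ⟨insert_nonempty _ _, _, W_mem_bNF hxσ, fun y hy => ?_⟩
        rw [mem_insert] at hy
        rw [mem_erase, mem_Icc]
        have hxm := mem_Icc.1 hxσ
        rcases hy with rfl | hy
        · exact ⟨by omega, by omega, by omega⟩
        · have := mem_Icc.1 (hτ hy)
          exact ⟨fun h => hxτ (h ▸ hy), by omega, by omega⟩

/-- For `d ≥ 2` and `m ≥ 1`, the boundary complex `∂N^{d+1}_{m+d+1}` is a stacked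
`d`-sphere, and `A_m = {1, …, d+1}` and `B_m = {m+1, …, m+d+1}` are two of its facets. -/

theorem stmt18 (d m : ℕ) (hd : 2 ≤ d) (hm : 1 ≤ m) :
    IsStackedSphere (boundaryN d m) d ∧
    IsFacet (boundaryN d m) (Finset.Icc 1 (d + 1)) ∧
    IsFacet (boundaryN d m) (Finset.Icc (m + 1) (m + d + 1)) := by
  have hfacet : ∀ n, 1 ≤ n → IsFacet (boundaryN d n) (Finset.Icc 1 (d + 1)) ∧
      IsFacet (boundaryN d n) (Finset.Icc (n + 1) (n + d + 1)) :=
    fun n hn => ⟨isFacet_of_mem_bNF (A_mem_bNF hn), isFacet_of_mem_bNF (B_mem_bNF hn)⟩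
  refine ⟨⟨boundaryN d 1, bN_one_standard d, ?_⟩, (hfacet m hm).1, (hfacet m hm).2⟩
  induction m, hm using Nat.le_induction with
  | base => exact Relation.ReflTransGen.refl
  | succ n hn ih => exact ih.tail (step_starring d n hn)


end
end
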